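/- arXiv:2502.20591 — 8 statements merged into one kernel-verified Lean document; each statement's English description precedes it below -/
import Mathlib

section
/- Let A and B be finite-dimensional unital C*-algebras over ℂ, and let γ be an encoding from the self-adjoint elements of A to the self-adjoint elements of B. Then γ is ℝ-linear: γ(a + b) = γ(a) + γ(b) and γ(r • a) = r • γ(a) for all self-adjoint a, b ∈ A and all r ∈ ℝ. -/
lemma selfAdjoint_eq_zero_of_spectrum_subset
    {B : Type*} [NormedRing B] [StarRing B] [CStarRing B] [NormedAlgebra ℂ B] [StarModule ℂ B]
    [CompleteSpace B]
    {b : B} (hb : IsSelfAdjoint b) (hs : spectrum ℝ b ⊆ {0}) : b = 0 := by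
  letI : CStarAlgebra B := { star_smul := star_smul }
  have h1 : (spectralRadius ℝ b).toReal = ‖b‖ := hb.toReal_spectralRadius_eq_norm
  have h2 : spectralRadius ℝ b ≤ 0 := by
    rw [spectralRadius]
    exact iSup₂_le fun k hk => by simp [Set.mem_singleton_iff.mp (hs hk)]
  have h3 : spectralRadius ℝ b = 0 := le_antisymm h2 zero_le
  rw [h3] at h1
  simp only [ENNReal.toReal_zero] at h1
  exact norm_eq_zero.mp h1.symm

/-- An encoding (a spectrum-preserving, convex map) between the
self-adjoint parts of finite-dimensional unital C*-algebras is `ℝ`-linear. -/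
theorem encoding_is_real_linear
    {A B : Type*}
    [NormedRing A] [StarRing A] [CStarRing A] [NormedAlgebra ℂ A] [StarModule ℂ A]
    [CompleteSpace A] [FiniteDimensional ℂ A]
    [NormedRing B] [StarRing B] [CStarRing B] [NormedAlgebra ℂ B] [StarModule ℂ B]
    [CompleteSpace B] [FiniteDimensional ℂ B]
    (γ : selfAdjoint A → selfAdjoint B)
    (hspec : ∀ a : selfAdjoint A, spectrum ℝ ((γ a : B)) = spectrum ℝ ((a : A)))
    (hconv : ∀ (a b : selfAdjoint A) (l : ℝ), l ∈ Set.Icc (0 : ℝ) 1 →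
      γ (l • a + (1 - l) • b) = l • γ a + (1 - l) • γ b) :
    (∀ a b : selfAdjoint A, γ (a + b) = γ a + γ b) ∧
      (∀ (r : ℝ) (a : selfAdjoint A), γ (r • a) = r • γ a) := by
  -- `γ 0 = 0`
  have h0 : γ 0 = 0 := by
    have hs : spectrum ℝ ((γ 0 : B)) ⊆ {0} := by
      rw [hspec]
      intro r hr
      by_contra hr0
      apply spectrum.notMem_iff.mpr ?_ hr
      have : ((0 : selfAdjoint A) : A) = 0 := rfl
      rw [this, sub_zero]
      exact (isUnit_iff_ne_zero.mpr hr0).map (algebraMap ℝ A)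
    have := selfAdjoint_eq_zero_of_spectrum_subset (γ 0).prop hs
    exact Subtype.ext (by simpa using this)
  -- scaling by `l ∈ [0,1]`
  have hscale : ∀ (l : ℝ), l ∈ Set.Icc (0:ℝ) 1 → ∀ x : selfAdjoint A,
      γ (l • x) = l • γ x := by
    intro l hl x
    have := hconv x 0 l hl
    simpa [h0] using this
  have hhalfmem : (1/2 : ℝ) ∈ Set.Icc (0:ℝ) 1 := by norm_num
  -- doubling
  have hdouble : ∀ x : selfAdjoint A, γ ((2:ℝ) • x) = (2:ℝ) • γ x := by
    intro x
    have h : γ (((1/2:ℝ) * 2) • x) = (1/2:ℝ) • γ ((2:ℝ) • x) := by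
      rw [mul_smul]; exact hscale (1/2) hhalfmem _
    norm_num at h
    rw [h, smul_smul]
    norm_num
  -- additivity
  have hadd : ∀ a b : selfAdjoint A, γ (a + b) = γ a + γ b := by
    intro a b
    have key : a + b = (2:ℝ) • ((1/2:ℝ) • a + (1/2:ℝ) • b) := by
      rw [smul_add, smul_smul, smul_smul]
      norm_num
    have hc := hconv a b (1/2) hhalfmem
    norm_num at hc
    rw [key, hdouble, hc, smul_add, smul_smul, smul_smul]
    norm_num
  -- negation
  have hneg : ∀ a : selfAdjoint A, γ (-a) = -γ a := by
    intro a
    have h := hadd a (-a)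
    rw [add_neg_cancel, h0] at h
    exact eq_neg_of_add_eq_zero_right h.symm
  -- nonnegative scaling
  have hnonneg : ∀ (r : ℝ), 0 ≤ r → ∀ a : selfAdjoint A, γ (r • a) = r • γ a := by
    intro r hr a
    rcases le_or_gt r 1 with h1 | h1
    · exact hscale r ⟨hr, h1⟩ a
    · have hr0 : (0:ℝ) < r := lt_trans one_pos h1
      have hinv : (r⁻¹ : ℝ) ∈ Set.Icc (0:ℝ) 1 :=
        ⟨by positivity, inv_le_one_of_one_le₀ h1.le⟩
      have h := hscale r⁻¹ hinv (r • a)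
      rw [smul_smul, inv_mul_cancel₀ hr0.ne', one_smul] at h
      rw [h, smul_smul, mul_inv_cancel₀ hr0.ne', one_smul]
  refine ⟨hadd, fun r a => ?_⟩
  rcases le_or_gt 0 r with hr | hr
  · exact hnonneg r hr a
  · have hra : r • a = (-r) • (-a) := by
      rw [neg_smul, smul_neg, neg_neg]
    rw [hra, hnonneg (-r) (by linarith), hneg, smul_neg, neg_smul, neg_neg]
end

section
/- Let A and B be finite-dimensional unital C*-algebras over ℂ and let γ be an ℝ-linear, spectrum-preserving map from the self-adjoint elements of A to the self-adjoint elements of B. If p ∈ A is a self-adjoint idempotent (p² = p, p* = p), then γ(p) is also an idempotent: γ(p)² = γ(p). -/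
/-- The real spectrum of an idempotent is contained in `{0, 1}`. -/
lemma idempotent_spectrum_subset {A : Type*} [Ring A] [Algebra ℝ A]
    (p : A) (hp : p * p = p) : spectrum ℝ p ⊆ {0, 1} := by
  intro x hx
  by_contra hx01
  simp only [Set.mem_insert_iff, Set.mem_singleton_iff, not_or] at hx01
  obtain ⟨h0, h1⟩ := hx01
  have h1' : x - 1 ≠ 0 := sub_ne_zero.mpr h1
  have hc : x * (x - 1) ≠ 0 := mul_ne_zero h0 h1'
  have expand : (x • (1:A) - p) * ((x - 1) • (1:A) + p) = (x * (x - 1)) • 1 := by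
    simp only [sub_mul, mul_add, smul_mul_assoc, mul_smul_comm, one_mul, mul_one, hp, smul_smul]
    module
  have expand' : ((x - 1) • (1:A) + p) * (x • (1:A) - p) = (x * (x - 1)) • 1 := by
    simp only [add_mul, mul_sub, smul_mul_assoc, mul_smul_comm, one_mul, mul_one, hp, smul_smul]
    module
  have hu : IsUnit (algebraMap ℝ A x - p) := by
    rw [Algebra.algebraMap_eq_smul_one]
    refine ⟨⟨x • (1:A) - p, (x * (x - 1))⁻¹ • ((x - 1) • (1:A) + p), ?_, ?_⟩, rfl⟩
    · rw [mul_smul_comm, expand, smul_smul, inv_mul_cancel₀ hc, one_smul]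
    · rw [smul_mul_assoc, expand', smul_smul, inv_mul_cancel₀ hc, one_smul]
  exact (spectrum.notMem_iff.mpr hu) hx

/-- An `ℝ`-linear, spectrum-preserving map between the self-adjoint
parts of finite-dimensional unital C*-algebras sends self-adjoint idempotents to
idempotents. -/
theorem spectrum_preserving_map_preserves_idempotents
    {A B : Type*}
    [NormedRing A] [StarRing A] [CStarRing A] [NormedAlgebra ℂ A] [StarModule ℂ A]
    [CompleteSpace A] [FiniteDimensional ℂ A]
    [NormedRing B] [StarRing B] [CStarRing B] [NormedAlgebra ℂ B] [StarModule ℂ B]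
    [CompleteSpace B] [FiniteDimensional ℂ B]
    (γ : selfAdjoint A → selfAdjoint B)
    (hadd : ∀ a b : selfAdjoint A, γ (a + b) = γ a + γ b)
    (hsmul : ∀ (r : ℝ) (a : selfAdjoint A), γ (r • a) = r • γ a)
    (hspec : ∀ a : selfAdjoint A, spectrum ℝ ((γ a : B)) = spectrum ℝ ((a : A)))
    (p : selfAdjoint A) (hp : (p : A) * (p : A) = (p : A)) :
    (γ p : B) * (γ p : B) = (γ p : B) := by
  letI : CStarAlgebra B := { }
  set q : B := (γ p : B) with hq
  have hqsa : IsSelfAdjoint q := (γ p).prop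
  have hspec01 : spectrum ℝ q ⊆ {0, 1} := by
    rw [hspec p]
    exact idempotent_spectrum_subset _ hp
  have key : ∀ x ∈ spectrum ℝ q, x * x - x = 0 := by
    intro x hx
    have := hspec01 hx
    simp only [Set.mem_insert_iff, Set.mem_singleton_iff] at this
    rcases this with h | h <;> rw [h] <;> ring
  have h1 : cfc (fun x : ℝ => x * x - x) q = q * q - q := by
    rw [cfc_sub _ _ q, cfc_mul _ _ q, cfc_id' ℝ q]
  have h2 : cfc (fun x : ℝ => x * x - x) q = 0 := by
    rw [← cfc_zero ℝ q]
    exact cfc_congr key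
  have := h1.symm.trans h2
  rw [sub_eq_zero] at this
  exact this
end

section
/- Let A and B be finite-dimensional unital C*-algebras over ℂ and let γ be an ℝ-linear, spectrum-preserving map from the self-adjoint elements of A to the self-adjoint elements of B. If p, q ∈ A are self-adjoint idempotents with p·q = 0, then γ(p)·γ(q) + γ(q)·γ(p) = 0 in B. -/
/-- Spectrum of an idempotent is contained in `{0, 1}`. -/
lemma idem_spectrum_subset {A : Type*} [Ring A] [Algebra ℝ A] (p : A)
    (hp : p * p = p) : spectrum ℝ p ⊆ ({0, 1} : Set ℝ) := by
  intro l hl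
  by_contra hl01
  simp only [Set.mem_insert_iff, Set.mem_singleton_iff, not_or] at hl01
  obtain ⟨h0, h1⟩ := hl01
  rw [spectrum.mem_iff] at hl
  apply hl
  have hne : l * (l - 1) ≠ 0 := mul_ne_zero h0 (sub_ne_zero.mpr h1)
  set c := algebraMap ℝ A
  have hsub : c l * p - p * c (l - 1) - p * p = 0 := by
    rw [hp, ← (Algebra.commutes (l - 1) p), ← sub_mul, ← map_sub]
    simp only [sub_sub_cancel, map_one, one_mul, sub_self]
  have key : (c l - p) * (c (l - 1) + p) = c (l * (l - 1)) := by
    have expand : (c l - p) * (c (l - 1) + p)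
        = c l * c (l - 1) + (c l * p - p * c (l - 1) - p * p) := by noncomm_ring
    rw [expand, hsub, add_zero, ← map_mul]
  have h₁ : Commute (c l) (c (l - 1) + p) :=
    Commute.add_right (by rw [Commute, SemiconjBy, ← map_mul, ← map_mul, mul_comm])
      (Algebra.commutes l p)
  have h₂ : Commute p (c (l - 1) + p) :=
    Commute.add_right ((Algebra.commutes (l - 1) p).symm) (Commute.refl p)
  have key' : (c (l - 1) + p) * (c l - p) = c (l * (l - 1)) := by
    rw [← (h₁.sub_left h₂).eq, key]
  refine ⟨⟨c l - p, (l * (l - 1))⁻¹ • (c (l - 1) + p), ?_, ?_⟩, rfl⟩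
  · rw [mul_smul_comm, key, Algebra.algebraMap_eq_smul_one, smul_smul,
      inv_mul_cancel₀ hne, one_smul]
  · rw [smul_mul_assoc, key', Algebra.algebraMap_eq_smul_one, smul_smul,
      inv_mul_cancel₀ hne, one_smul]

/-- A self-adjoint element with spectrum in `{0,1}` is idempotent. -/
lemma selfadjoint_spec01_idem {B : Type*}
    [NormedRing B] [StarRing B] [CStarRing B] [NormedAlgebra ℂ B] [StarModule ℂ B]
    [CompleteSpace B] (x : B) (hx : IsSelfAdjoint x)
    (hs : spectrum ℝ x ⊆ ({0, 1} : Set ℝ)) : x * x = x := by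
  letI : CStarAlgebra B := {}
  have h0 : cfc (fun t : ℝ => t * t - t) x = cfc (fun _ : ℝ => (0 : ℝ)) x := by
    apply cfc_congr
    intro t ht
    rcases hs ht with h | h <;> simp_all
  rw [cfc_sub _ _ x, cfc_mul _ _ x, cfc_id' ℝ x, cfc_const_zero ℝ x, sub_eq_zero] at h0
  exact h0

/-- An `ℝ`-linear, spectrum-preserving map between the self-adjoint
parts of finite-dimensional unital C*-algebras sends orthogonal self-adjoint
idempotents to anticommuting elements. -/
theorem spectrum_preserving_map_orthogonal_idempotents_anticommute
    {A B : Type*}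
    [NormedRing A] [StarRing A] [CStarRing A] [NormedAlgebra ℂ A] [StarModule ℂ A]
    [CompleteSpace A] [FiniteDimensional ℂ A]
    [NormedRing B] [StarRing B] [CStarRing B] [NormedAlgebra ℂ B] [StarModule ℂ B]
    [CompleteSpace B] [FiniteDimensional ℂ B]
    (γ : selfAdjoint A → selfAdjoint B)
    (hadd : ∀ a b : selfAdjoint A, γ (a + b) = γ a + γ b)
    (hsmul : ∀ (r : ℝ) (a : selfAdjoint A), γ (r • a) = r • γ a)
    (hspec : ∀ a : selfAdjoint A, spectrum ℝ ((γ a : B)) = spectrum ℝ ((a : A)))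
    (p q : selfAdjoint A)
    (hp : (p : A) * (p : A) = (p : A)) (hq : (q : A) * (q : A) = (q : A))
    (hpq : (p : A) * (q : A) = 0) :
    (γ p : B) * (γ q : B) + (γ q : B) * (γ p : B) = 0 := by
  have hqp : (q : A) * (p : A) = 0 := by
    have := congrArg star hpq
    rwa [star_mul, p.2.star_eq, q.2.star_eq, star_zero] at this
  have hpqidem : ((p + q : selfAdjoint A) : A) * ((p + q : selfAdjoint A) : A)
      = ((p + q : selfAdjoint A) : A) := by
    push_cast
    rw [add_mul, mul_add, mul_add, hp, hq, hpq, hqp]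
    abel
  have key : ∀ a : selfAdjoint A, ((a : A) * (a : A) = (a : A)) →
      (γ a : B) * (γ a : B) = (γ a : B) := fun a ha =>
    selfadjoint_spec01_idem _ (γ a).2 (by rw [hspec]; exact idem_spectrum_subset _ ha)
  have h1 := key p hp
  have h2 := key q hq
  have h3 := key (p + q) hpqidem
  rw [hadd] at h3
  have hcoe : ((γ p + γ q : selfAdjoint B) : B) = (γ p : B) + (γ q : B) := rfl
  rw [hcoe, add_mul, mul_add, mul_add, h1, h2] at h3
  have h5 : (γ p : B) * (γ q : B) + (γ q : B) * (γ p : B) + ((γ p : B) + (γ q : B))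
      = 0 + ((γ p : B) + (γ q : B)) := by
    rw [zero_add]
    conv_rhs => rw [← h3]
    abel
  exact add_right_cancel h5
end

section
/- Let A and B be finite-dimensional unital C*-algebras over ℂ and let γ be an ℝ-linear, spectrum-preserving map from the self-adjoint elements of A to the self-adjoint elements of B. Then γ is a Jordan homomorphism: for all self-adjoint a, b ∈ A one has γ(a·b + b·a) = γ(a)·γ(b) + γ(b)·γ(a) (and in particular γ(a²) = γ(a)²), where a·b + b·a is again self-adjoint. -/
/-- The Jordan product `a*b + b*a` of two self-adjoint elements is self-adjoint. -/
def selfAdjoint.jordan {A : Type*} [Ring A] [StarRing A]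
    (a b : selfAdjoint A) : selfAdjoint A :=
  ⟨(a : A) * b + (b : A) * a, by
    have ha := selfAdjoint.mem_iff.mp a.2
    have hb := selfAdjoint.mem_iff.mp b.2
    simp only [selfAdjoint.mem_iff, star_add, star_mul, ha, hb]
    exact add_comm _ _⟩

/-- The square of a self-adjoint element, as a self-adjoint element. -/
private def selfAdjoint.sq' {A : Type*} [Ring A] [StarRing A] (a : selfAdjoint A) :
    selfAdjoint A :=
  ⟨(a : A) * a, by
    have ha := selfAdjoint.mem_iff.mp a.2
    simp only [selfAdjoint.mem_iff, star_mul, ha]⟩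

private theorem ortho_of_idem' {R : Type*} [Ring R] [Algebra ℝ R] {p q : R} (hp : p * p = p)
    (hq : q * q = q) (hpq : (p + q) * (p + q) = p + q) : p * q = 0 ∧ q * p = 0 := by
  have h : p * p + p * q + (q * p + q * q) = p + q := by rw [← hpq]; noncomm_ring
  rw [hp, hq] at h
  have h0 : p * q + q * p = 0 := by
    have h' : p * q + q * p = (p + p * q + (q * p + q)) - (p + q) := by abel
    rw [h, sub_self] at h'; exact h'
  have h1 : p * q + p * q * p = 0 := by
    have := congrArg (fun x => p * x) h0
    simpa [mul_add, ← mul_assoc, hp] using this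
  have h2 : p * q * p + q * p = 0 := by
    have := congrArg (fun x => x * p) h0
    simpa [add_mul, mul_assoc, hp] using this
  have h3 : p * q = q * p := by
    have h' : p * q - q * p = (p * q + p * q * p) - (p * q * p + q * p) := by abel
    rw [h1, h2, sub_self] at h'; exact sub_eq_zero.mp h'
  have h4 : (2 : ℝ) • (p * q) = 0 := by
    rw [two_smul]; nth_rewrite 2 [h3]; exact h0
  have h5 : p * q = 0 := by
    have := congrArg (fun x => (2 : ℝ)⁻¹ • x) h4
    simpa [smul_smul] using this
  exact ⟨h5, by rw [← h3, h5]⟩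

private theorem sum_sq_ortho' {R : Type*} [Ring R] [Algebra ℝ R] {ι : Type*} [DecidableEq ι]
    (s : Finset ι) (q : ι → R) (c : ι → ℝ)
    (h : ∀ i ∈ s, ∀ j ∈ s, q i * q j = if i = j then q i else 0) :
    (∑ i ∈ s, c i • q i) * (∑ i ∈ s, c i • q i) = ∑ i ∈ s, (c i * c i) • q i := by
  rw [Finset.sum_mul_sum]
  refine Finset.sum_congr rfl fun i hi => ?_
  rw [Finset.sum_eq_single i]
  · rw [smul_mul_smul_comm, h i hi i hi, if_pos rfl]
  · intro j hj hji
    rw [smul_mul_smul_comm, h i hi j hj, if_neg (fun e => hji e.symm), smul_zero]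
  · intro hi'; exact absurd hi hi'

private theorem spectrum_finite' {A : Type*} [NormedRing A] [StarRing A] [CStarRing A]
    [NormedAlgebra ℂ A] [StarModule ℂ A] [CompleteSpace A] [FiniteDimensional ℂ A] [Nontrivial A]
    (a : A) : (spectrum ℝ a).Finite := by
  have : FiniteDimensional ℝ A := FiniteDimensional.trans ℝ ℂ A
  have hi : IsIntegral ℝ a := IsIntegral.of_finite ℝ a
  have hp : minpoly ℝ a ≠ 0 := minpoly.ne_zero hi
  apply (Polynomial.finite_setOf_isRoot hp).subset
  intro t ht
  have h2 := spectrum.subset_polynomial_aeval a (minpoly ℝ a) ⟨t, ht, rfl⟩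
  rw [minpoly.aeval, spectrum.zero_eq] at h2
  simpa [Polynomial.IsRoot] using h2

private theorem idem_of_spec01' {A : Type*} [NormedRing A] [StarRing A] [CStarRing A]
    [NormedAlgebra ℂ A] [StarModule ℂ A] [CompleteSpace A]
    {x : A} (hx : IsSelfAdjoint x) (h : spectrum ℝ x ⊆ {0, 1}) : x * x = x := by
  letI : CStarAlgebra A := ⟨⟩
  conv_lhs => rw [← cfc_id' ℝ x hx]
  rw [← cfc_mul _ _ x]
  rw [cfc_congr (g := fun t : ℝ => t) (fun t ht => by rcases h ht with h0 | h1 <;> simp_all),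
    cfc_id' ℝ x hx]

/-- The indicator function of the point `l`. -/
private noncomputable def ind01 (l t : ℝ) : ℝ := if t = l then 1 else 0

/-- Spectral decomposition of a self-adjoint element of a finite-dimensional C*-algebra
into mutually orthogonal projections. -/
private theorem selfAdjoint_decomp' {A : Type*} [NormedRing A] [StarRing A] [CStarRing A]
    [NormedAlgebra ℂ A] [StarModule ℂ A] [CompleteSpace A] [FiniteDimensional ℂ A] [Nontrivial A]
    (a : selfAdjoint A) :
    ∃ (s : Finset ℝ) (P : ℝ → selfAdjoint A),
      (∀ l ∈ s, ∀ m ∈ s, (P l : A) * (P m : A) = if l = m then (P l : A) else 0) ∧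
      (∀ l ∈ s, spectrum ℝ ((P l : A)) ⊆ {0, 1}) ∧
      (∀ l ∈ s, ∀ m ∈ s, l ≠ m → spectrum ℝ ((P l : A) + (P m : A)) ⊆ {0, 1}) ∧
      a = ∑ l ∈ s, l • P l := by
  classical
  letI : CStarAlgebra A := ⟨⟩
  have hsa : IsSelfAdjoint (a : A) := a.2
  have hfin : (spectrum ℝ (a : A)).Finite := spectrum_finite' (a : A)
  have hcont : ∀ g : ℝ → ℝ, ContinuousOn g (spectrum ℝ (a : A)) := fun g =>
    hfin.continuousOn g
  refine ⟨hfin.toFinset, fun l => ⟨cfc (ind01 l) (a : A), cfc_predicate _ _⟩, ?_, ?_, ?_, ?_⟩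
  · intro l hl m hm
    simp only
    rw [← cfc_mul _ _ (a : A) (hcont _) (hcont _)]
    by_cases hlm : l = m
    · subst hlm
      rw [if_pos rfl]
      refine cfc_congr fun t _ => ?_
      simp only [ind01]
      split_ifs <;> simp
    · rw [if_neg hlm]
      have hz : (fun t => ind01 l t * ind01 m t) = (fun _ : ℝ => (0 : ℝ)) := by
        funext t
        simp only [ind01]
        split_ifs with h1 h2
        · exact absurd (h1.symm.trans h2) hlm
        all_goals simp
      rw [hz]
      calc cfc (fun _ : ℝ => (0 : ℝ)) (a : A) = algebraMap ℝ A 0 := cfc_const 0 (a : A) hsa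
        _ = 0 := map_zero _
  · intro l _
    rw [cfc_map_spectrum (ind01 l) (a : A) hsa (hcont _)]
    rintro - ⟨t, _, rfl⟩
    simp only [ind01]
    split_ifs <;> simp
  · intro l _ m _ hlm
    have hadd' : (⟨cfc (ind01 l) (a : A), cfc_predicate _ _⟩ : selfAdjoint A).val +
        (⟨cfc (ind01 m) (a : A), cfc_predicate _ _⟩ : selfAdjoint A).val
        = cfc (fun t => ind01 l t + ind01 m t) (a : A) :=
      (cfc_add (a : A) (ind01 l) (ind01 m) (hcont _) (hcont _)).symm
    rw [hadd', cfc_map_spectrum _ (a : A) hsa (hcont _)]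
    rintro - ⟨t, _, rfl⟩
    simp only [ind01]
    split_ifs with h1 h2
    · exact absurd (h1.symm.trans h2) hlm
    all_goals simp
  · apply Subtype.ext
    rw [AddSubmonoidClass.coe_finset_sum]
    simp only [selfAdjoint.val_smul]
    have h1 : ∀ l : ℝ, l • cfc (ind01 l) (a : A) = cfc (fun t => l • ind01 l t) (a : A) :=
      fun l => (cfc_smul l (ind01 l) (a : A) (hcont _)).symm
    calc (a : A) = cfc (fun t : ℝ => t) (a : A) := (cfc_id' ℝ (a : A) hsa).symm
      _ = cfc (∑ l ∈ hfin.toFinset, fun t => l • ind01 l t) (a : A) := by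
          refine cfc_congr fun t ht => ?_
          rw [Finset.sum_apply]
          rw [Finset.sum_eq_single t]
          · simp [ind01]
          · intro l _ hlt
            have hne : t ≠ l := fun e => hlt e.symm
            simp [ind01, hne]
          · intro h; exact absurd (hfin.mem_toFinset.mpr ht) h
      _ = ∑ l ∈ hfin.toFinset, cfc (fun t => l • ind01 l t) (a : A) :=
          cfc_sum _ (a : A) _ (fun i _ => hcont _)
      _ = ∑ l ∈ hfin.toFinset, l • cfc (ind01 l) (a : A) :=
          Finset.sum_congr rfl fun l _ => (h1 l).symm

/-- An `ℝ`-linear, spectrum-preserving map between the self-adjoint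
parts of finite-dimensional unital C*-algebras is a Jordan homomorphism. -/
theorem spectrum_preserving_map_is_jordan_homomorphism
    {A B : Type*}
    [NormedRing A] [StarRing A] [CStarRing A] [NormedAlgebra ℂ A] [StarModule ℂ A]
    [CompleteSpace A] [FiniteDimensional ℂ A]
    [NormedRing B] [StarRing B] [CStarRing B] [NormedAlgebra ℂ B] [StarModule ℂ B]
    [CompleteSpace B] [FiniteDimensional ℂ B]
    (γ : selfAdjoint A → selfAdjoint B)
    (hadd : ∀ a b : selfAdjoint A, γ (a + b) = γ a + γ b)
    (hsmul : ∀ (r : ℝ) (a : selfAdjoint A), γ (r • a) = r • γ a)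
    (hspec : ∀ a : selfAdjoint A, spectrum ℝ ((γ a : B)) = spectrum ℝ ((a : A))) :
    ∀ a b : selfAdjoint A,
      (γ (selfAdjoint.jordan a b) : B) = (γ a : B) * (γ b : B) + (γ b : B) * (γ a : B) := by
  classical
  have h0 : γ 0 = 0 := by
    have := hsmul 0 0
    simpa using this
  have hneg : ∀ x, γ (-x) = -γ x := fun x => by
    have := hsmul (-1) x
    simpa using this
  have hsub : ∀ x y, γ (x - y) = γ x - γ y := fun x y => by
    rw [sub_eq_add_neg, hadd, hneg, sub_eq_add_neg]
  have hmapsum : ∀ (s : Finset ℝ) (g : ℝ → selfAdjoint A),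
      γ (∑ i ∈ s, g i) = ∑ i ∈ s, γ (g i) := by
    intro s g
    induction s using Finset.induction with
    | empty => simpa using h0
    | insert _ _ h ih => rw [Finset.sum_insert h, hadd, ih, Finset.sum_insert h]
  -- Key step: γ preserves squares.
  have key : ∀ a : selfAdjoint A, (γ (selfAdjoint.sq' a) : B) = (γ a : B) * (γ a : B) := by
    intro a
    rcases subsingleton_or_nontrivial A with hA | hA
    · have hall : ∀ x : selfAdjoint A, x = 0 := fun x => Subtype.ext (Subsingleton.elim _ _)
      rw [hall (selfAdjoint.sq' a), hall a, h0]
      simp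
    · obtain ⟨s, P, hPmul, hP01, hPsum01, hsum⟩ := selfAdjoint_decomp' a
      have hGidem : ∀ l ∈ s, (γ (P l) : B) * (γ (P l) : B) = (γ (P l) : B) := fun l hl =>
        idem_of_spec01' (γ (P l)).2 (by rw [hspec]; exact hP01 l hl)
      have hGmul : ∀ l ∈ s, ∀ m ∈ s,
          (γ (P l) : B) * (γ (P m) : B) = if l = m then (γ (P l) : B) else 0 := by
        intro l hl m hm
        by_cases hlm : l = m
        · subst hlm; rw [if_pos rfl]; exact hGidem l hl
        · rw [if_neg hlm]
          have hsum' : ((γ (P l) : B) + (γ (P m) : B)) * ((γ (P l) : B) + (γ (P m) : B))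
              = (γ (P l) : B) + (γ (P m) : B) := by
            have hcoe : (γ (P l) : B) + (γ (P m) : B) = (γ (P l + P m) : B) := by
              rw [hadd]; rfl
            rw [hcoe]
            refine idem_of_spec01' (γ (P l + P m)).2 ?_
            rw [hspec]
            exact hPsum01 l hl m hm hlm
          exact (ortho_of_idem' (hGidem l hl) (hGidem m hm) hsum').1
      -- express γ a as a sum
      have hγa : (γ a : B) = ∑ l ∈ s, l • (γ (P l) : B) := by
        rw [hsum, hmapsum, AddSubmonoidClass.coe_finset_sum]
        refine Finset.sum_congr rfl fun l _ => ?_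
        rw [hsmul, selfAdjoint.val_smul]
      -- express the square of a as a sum
      have hsq : selfAdjoint.sq' a = ∑ l ∈ s, (l * l) • P l := by
        apply Subtype.ext
        have hcoe : (a : A) = ∑ l ∈ s, l • (P l : A) := by
          conv_lhs => rw [hsum]
          rw [AddSubmonoidClass.coe_finset_sum]
          exact Finset.sum_congr rfl fun l _ => selfAdjoint.val_smul l (P l)
        show (a : A) * (a : A) = _
        rw [AddSubmonoidClass.coe_finset_sum]
        simp only [selfAdjoint.val_smul]
        rw [hcoe, sum_sq_ortho' s _ _ hPmul]
      rw [hsq, hmapsum, AddSubmonoidClass.coe_finset_sum, hγa,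
        sum_sq_ortho' s _ _ hGmul]
      refine Finset.sum_congr rfl fun l _ => ?_
      rw [hsmul, selfAdjoint.val_smul]
  -- Polarization.
  intro a b
  have hJ : selfAdjoint.jordan a b =
      selfAdjoint.sq' (a + b) - selfAdjoint.sq' a - selfAdjoint.sq' b := by
    apply Subtype.ext
    show (a : A) * b + (b : A) * a = ((a : A) + b) * ((a : A) + b) - (a : A) * a - (b : A) * b
    noncomm_ring
  have hcoe : (γ (selfAdjoint.jordan a b) : B)
      = (γ (selfAdjoint.sq' (a + b)) : B) - (γ (selfAdjoint.sq' a) : B)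
        - (γ (selfAdjoint.sq' b) : B) := by
    rw [hJ, hsub, hsub]
    simp
  rw [hcoe, key, key, key]
  have hab : (γ (a + b) : B) = (γ a : B) + (γ b : B) := by rw [hadd]; rfl
  rw [hab]
  noncomm_ring
end

section
/- Let n, m ≥ 1 and let Γ : M_n(ℂ) → M_m(ℂ) be a unital real star ring homomorphism. Set u = Γ(i • 1) and e = (1/2) • (1 − i • u). Then e² = e, eᴴ = e, e · Γ(α) = Γ(α) · e for every α, and for all λ ∈ ℂ and all α ∈ M_n(ℂ): Γ(λ • α) · e = λ • (Γ(α) · e) and Γ(λ • α) · (1 − e) = (conj λ) • (Γ(α) · (1 − e)). In other words, Γ is ℂ-linear on the corner determined by e and conjugate-linear on the complementary corner. -/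
open Matrix in
/-- A unital real star ring homomorphism between complex matrix algebras. -/
def IsUnitalRealStarRingHom {n m : ℕ}
    (Γ : Matrix (Fin n) (Fin n) ℂ → Matrix (Fin m) (Fin m) ℂ) : Prop :=
  (∀ α β, Γ (α + β) = Γ α + Γ β) ∧
  (∀ α β, Γ (α * β) = Γ α * Γ β) ∧
  Γ 1 = 1 ∧
  (∀ (r : ℝ) (α), Γ (r • α) = r • Γ α) ∧
  (∀ α, Γ αᴴ = (Γ α)ᴴ)

open Matrix in
/-- the central projection `e = (1 - i·u)/2` built from `u = Γ(i•1)`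
splits a unital real star ring homomorphism `Γ` into a `ℂ`-linear corner and a
conjugate-linear corner. -/
theorem splitting_projection_of_real_star_ring_hom
    (n m : ℕ) (hn : 1 ≤ n) (hm : 1 ≤ m)
    (Γ : Matrix (Fin n) (Fin n) ℂ → Matrix (Fin m) (Fin m) ℂ)
    (hΓ : IsUnitalRealStarRingHom Γ) :
    letI u : Matrix (Fin m) (Fin m) ℂ := Γ (Complex.I • 1)
    letI e : Matrix (Fin m) (Fin m) ℂ := ((1 : ℂ) / 2) • (1 - Complex.I • u)
    e * e = e ∧
    eᴴ = e ∧
    (∀ α, e * Γ α = Γ α * e) ∧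
    (∀ (l : ℂ) (α), Γ (l • α) * e = l • (Γ α * e)) ∧
    (∀ (l : ℂ) (α), Γ (l • α) * (1 - e) = (starRingEnd ℂ l) • (Γ α * (1 - e))) := by
  obtain ⟨hadd, hmul, hone, hreal, hstar⟩ := hΓ
  set u : Matrix (Fin m) (Fin m) ℂ := Γ (Complex.I • 1) with hu
  set e : Matrix (Fin m) (Fin m) ℂ := ((1 : ℂ) / 2) • (1 - Complex.I • u) with he
  -- real smul as complex smul
  have hcsmul : ∀ (r : ℝ) (α : Matrix (Fin n) (Fin n) ℂ), (r : ℂ) • α = r • α := by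
    intro r α; ext i j; simp [Complex.real_smul]
  have hcsmul' : ∀ (r : ℝ) (α : Matrix (Fin m) (Fin m) ℂ), (r : ℂ) • α = r • α := by
    intro r α; ext i j; simp [Complex.real_smul]
  have hzero : Γ 0 = 0 := by
    have := hadd 0 0
    simpa using this.symm
  have hneg : ∀ α, Γ (-α) = - Γ α := by
    intro α
    have h := hadd α (-α)
    simp [hzero] at h
    linear_combination (norm := abel) -h
  have hIsmul : ∀ α, Γ (Complex.I • α) = u * Γ α := by
    intro α
    have : Complex.I • α = (Complex.I • 1) * α := by rw [smul_mul_assoc, one_mul]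
    rw [this, hmul]
  have hIsmul' : ∀ α, Γ (Complex.I • α) = Γ α * u := by
    intro α
    have : Complex.I • α = α * (Complex.I • 1) := by rw [mul_smul_comm, mul_one]
    rw [this, hmul]
  have hcomm : ∀ α, u * Γ α = Γ α * u := fun α => (hIsmul α).symm.trans (hIsmul' α)
  have husq : u * u = -1 := by
    have h1 : (Complex.I • 1 : Matrix (Fin n) (Fin n) ℂ) * (Complex.I • 1) = -1 := by
      rw [smul_mul_assoc, mul_smul_comm, smul_smul, Complex.I_mul_I, neg_one_smul, mul_one]
    calc u * u = Γ ((Complex.I • 1) * (Complex.I • 1)) := (hmul _ _).symm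
    _ = Γ (-1) := by rw [h1]
    _ = -1 := by rw [hneg, hone]
  have hII : ∀ (x : Matrix (Fin m) (Fin m) ℂ), Complex.I • Complex.I • x = -x := by
    intro x; rw [smul_smul, Complex.I_mul_I, neg_one_smul]
  have hue : u * e = Complex.I • e := by
    rw [he, mul_smul_comm, mul_sub, mul_one, mul_smul_comm, husq, smul_comm Complex.I,
      smul_sub Complex.I, hII]
    module
  have h1e : (1 : Matrix (Fin m) (Fin m) ℂ) - e = ((1:ℂ)/2) • (1 + Complex.I • u) := by
    rw [he]; module
  have hue' : u * (1 - e) = (-Complex.I) • (1 - e) := by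
    rw [h1e, mul_smul_comm, mul_add, mul_one, mul_smul_comm, husq, neg_smul,
      smul_comm Complex.I, smul_add Complex.I, hII]
    module
  have key : ∀ (l : ℂ) (α), Γ (l • α) = l.re • Γ α + l.im • (u * Γ α) := by
    intro l α
    have hdecomp : l • α = (l.re : ℝ) • α + (l.im : ℝ) • (Complex.I • α) := by
      rw [← hcsmul, ← hcsmul, smul_smul, ← add_smul]
      congr 1
      exact (Complex.re_add_im l).symm
    rw [hdecomp, hadd, hreal, hreal, hIsmul]
  have hesq : e * e = e := by
    rw [he, smul_mul_assoc, mul_smul_comm, smul_smul, sub_mul, one_mul, mul_sub, mul_one,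
      smul_mul_assoc, mul_smul_comm, husq, hII, neg_neg]
    module
  have hestar : eᴴ = e := by
    have hustar : uᴴ = -u := by
      have h1 : (Complex.I • 1 : Matrix (Fin n) (Fin n) ℂ)ᴴ = -(Complex.I • 1) := by
        rw [conjTranspose_smul, conjTranspose_one]
        simp [Complex.conj_I]
      rw [hu, ← hstar, h1, hneg]
    rw [he, conjTranspose_smul, conjTranspose_sub, conjTranspose_one, conjTranspose_smul,
      hustar]
    simp [Complex.conj_I]
  have hcen : ∀ α, e * Γ α = Γ α * e := by
    intro α
    rw [he, smul_mul_assoc, mul_smul_comm]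
    congr 1
    rw [sub_mul, mul_sub, one_mul, mul_one, smul_mul_assoc, mul_smul_comm, hcomm]
  have hrecomb : ∀ (l : ℂ) (X : Matrix (Fin m) (Fin m) ℂ),
      l.re • X + l.im • (Complex.I • X) = l • X := by
    intro l X
    rw [← hcsmul', ← hcsmul', smul_smul, ← add_smul, Complex.re_add_im]
  have hrecomb' : ∀ (l : ℂ) (X : Matrix (Fin m) (Fin m) ℂ),
      l.re • X + l.im • ((-Complex.I) • X) = (starRingEnd ℂ l) • X := by
    intro l X
    rw [← hcsmul', ← hcsmul', smul_smul, ← add_smul]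
    congr 1
    rw [Complex.ext_iff]
    simp
  clear_value u e
  refine ⟨hesq, hestar, hcen, ?_, ?_⟩
  · intro l α
    rw [key, add_mul, smul_mul_assoc, smul_mul_assoc, hcomm, mul_assoc, hue, mul_smul_comm,
      hrecomb]
  · intro l α
    rw [key, add_mul, smul_mul_assoc, smul_mul_assoc, hcomm, mul_assoc, hue', mul_smul_comm,
      hrecomb']
end

section
/- Let n, m ≥ 1 and let π : M_n(ℂ) → M_m(ℂ) be a unital ℂ-algebra homomorphism satisfying π(αᴴ) = π(α)ᴴ for all α (a unital *-homomorphism). Then n divides m and there exists a unitary U ∈ M_m(ℂ) such that for all α ∈ M_n(ℂ), π(α) = U · D(α) · Uᴴ, where D(α) ∈ M_m(ℂ) is the block-diagonal matrix consisting of m/n copies of α on the diagonal, regarded as an m×m matrix via an identification of Fin(m/n) × Fin(n) with Fin(m). -/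
open Matrix

private lemma mul_vecMulVec {m' n' : Type*} [Fintype n'] (A : Matrix m' n' ℂ)
    (a : n' → ℂ) (b : m' → ℂ) : A * vecMulVec a b = vecMulVec (A *ᵥ a) b := by
  ext x y
  simp [mul_apply, vecMulVec_apply, mulVec, dotProduct, Finset.sum_mul, mul_assoc]

private lemma vecMulVec_mul {m' n' : Type*} [Fintype n'] (a : m' → ℂ) (b : n' → ℂ)
    (C : Matrix n' m' ℂ) : vecMulVec a b * C = vecMulVec a (b ᵥ* C) := by
  ext x y
  simp [mul_apply, vecMulVec_apply, vecMul, dotProduct, Finset.mul_sum, mul_assoc]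

private lemma sum_stdBasis_diag (n : ℕ) :
    (∑ i : Fin n, Matrix.single i i (1 : ℂ)) = 1 := by
  ext a b
  simp [Matrix.sum_apply, Matrix.single, one_apply, ite_and, eq_comm]

private lemma stdBasis_conjTranspose {n : ℕ} (i j : Fin n) :
    (Matrix.single i j (1 : ℂ))ᴴ = Matrix.single j i 1 := by
  ext a b
  simp [conjTranspose_apply, Matrix.single, and_comm, apply_ite]

private theorem aux_exists_u (n m : ℕ) (hn : 1 ≤ n)
    (π : Matrix (Fin n) (Fin n) ℂ →ₐ[ℂ] Matrix (Fin m) (Fin m) ℂ)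
    (hstar : ∀ α : Matrix (Fin n) (Fin n) ℂ, π αᴴ = (π α)ᴴ) :
    ∃ (k : ℕ) (u : Fin n × Fin k → (Fin m → ℂ)),
      (∀ p q, star (u p) ⬝ᵥ u q = if p = q then (1 : ℂ) else 0) ∧
      (∀ i j : Fin n, π (Matrix.single i j 1) =
        ∑ s : Fin k, vecMulVec (u (i, s)) (star (u (j, s)))) := by
  set S : Fin n → Fin n → Matrix (Fin m) (Fin m) ℂ :=
    fun i j => π (Matrix.single i j 1) with hS
  have hmulS : ∀ i j p q : Fin n, S i j * S p q = if j = p then S i q else 0 := by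
    intro i j p q
    rw [hS]
    simp only []
    rw [← _root_.map_mul]
    by_cases h : j = p
    · subst h; rw [if_pos rfl, Matrix.single_mul_single_same (c := 1) i j q 1, one_mul]
    · rw [if_neg h, Matrix.single_mul_single_of_ne (c := 1) i j p h 1, map_zero]
  have hstarS : ∀ i j, (S i j)ᴴ = S j i := by
    intro i j
    rw [hS]
    simp only []
    rw [← hstar, stdBasis_conjTranspose]
  have honeS : (∑ i, S i i) = 1 := by
    rw [hS]
    simp only []
    rw [← map_sum, sum_stdBasis_diag, _root_.map_one]
  have i0 : Fin n := ⟨0, hn⟩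
  set P : Matrix (Fin m) (Fin m) ℂ := S i0 i0 with hPdef
  have hP2 : P * P = P := by simpa using hmulS i0 i0 i0 i0
  have hPH : Pᴴ = P := hstarS i0 i0
  set V : Submodule ℂ (EuclideanSpace ℂ (Fin m)) :=
    (LinearMap.range P.mulVecLin).comap
      (WithLp.linearEquiv 2 ℂ (Fin m → ℂ)).toLinearMap with hV
  set k : ℕ := Module.finrank ℂ V with hk
  set b : OrthonormalBasis (Fin k) ℂ V := stdOrthonormalBasis ℂ V with hb
  set vs : Fin k → (Fin m → ℂ) :=
    fun s => WithLp.equiv 2 (Fin m → ℂ) ((b s : EuclideanSpace ℂ (Fin m))) with hvs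
  have hmem : ∀ s, vs s ∈ LinearMap.range P.mulVecLin := fun s => (b s).2
  have hPvs : ∀ s, P *ᵥ vs s = vs s := by
    intro s
    obtain ⟨w, hw⟩ := hmem s
    rw [← hw, Matrix.mulVecLin_apply, Matrix.mulVec_mulVec, hP2]
  have hvs_ortho : ∀ s t, star (vs s) ⬝ᵥ vs t = if s = t then (1 : ℂ) else 0 := by
    intro s t
    have h1 := orthonormal_iff_ite.mp b.orthonormal s t
    rw [Submodule.coe_inner, EuclideanSpace.inner_eq_star_dotProduct, dotProduct_comm] at h1
    exact h1
  have hrepr : ∀ w ∈ LinearMap.range P.mulVecLin,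
      w = ∑ s, (star (vs s) ⬝ᵥ w) • vs s := by
    intro w hw
    have hw' : (WithLp.equiv 2 (Fin m → ℂ)).symm w ∈ V := by
      simpa [hV, Submodule.mem_comap] using hw
    have h2 := b.sum_repr' (⟨(WithLp.equiv 2 (Fin m → ℂ)).symm w, hw'⟩ : V)
    have h3 := congrArg (Subtype.val) h2
    rw [AddSubmonoidClass.coe_finset_sum] at h3
    simp only [SetLike.val_smul] at h3
    have h4 := congrArg (WithLp.equiv 2 (Fin m → ℂ)) h3.symm
    simpa [hvs, EuclideanSpace.inner_eq_star_dotProduct, dotProduct_comm] using h4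
  have hcoef : ∀ s (x : Fin m → ℂ), star (vs s) ⬝ᵥ (P *ᵥ x) = star (vs s) ⬝ᵥ x := by
    intro s x
    rw [Matrix.dotProduct_mulVec]
    congr 1
    have h4 : star (vs s) ᵥ* P = star (Pᴴ *ᵥ vs s) := by
      rw [Matrix.star_mulVec, conjTranspose_conjTranspose]
    rw [h4, hPH, hPvs]
  have hPx : ∀ x, P *ᵥ x = ∑ s, (star (vs s) ⬝ᵥ x) • vs s := by
    intro x
    have h1 := hrepr (P *ᵥ x) ⟨x, Matrix.mulVecLin_apply _ _⟩
    rw [h1]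
    exact Finset.sum_congr rfl fun s _ => by rw [hcoef]
  have hPmat : P = ∑ s, vecMulVec (vs s) (star (vs s)) := by
    ext x y
    have h1 := congrFun (hPx (Pi.single y 1)) x
    simp only [Matrix.mulVec_single_one, Matrix.col_apply, mul_one, dotProduct_single, Finset.sum_apply,
      Pi.smul_apply, smul_eq_mul, Pi.star_apply, RCLike.star_def] at h1
    rw [h1, Matrix.sum_apply]
    refine Finset.sum_congr rfl fun s _ => ?_
    simp [vecMulVec_apply, mul_comm]
  refine ⟨k, fun p => S p.1 i0 *ᵥ vs p.2, ?_, ?_⟩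
  · rintro ⟨i, s⟩ ⟨j, t⟩
    have h1 : star (S i i0 *ᵥ vs s) ⬝ᵥ (S j i0 *ᵥ vs t)
        = star (vs s) ⬝ᵥ (((S i i0)ᴴ * S j i0) *ᵥ vs t) := by
      rw [Matrix.star_mulVec, ← Matrix.dotProduct_mulVec, Matrix.mulVec_mulVec]
    simp only []
    rw [h1, hstarS, hmulS]
    by_cases h : i = j
    · subst h
      rw [if_pos rfl, ← hPdef, hPvs, hvs_ortho]
      simp [Prod.ext_iff]
    · rw [if_neg h]
      simp [Prod.ext_iff, h]
  · intro i j
    show S i j = ∑ s, vecMulVec (S i i0 *ᵥ vs s) (star (S j i0 *ᵥ vs s))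
    have h1 : S i j = S i i0 * P * S i0 j := by
      rw [hPdef, hmulS, if_pos rfl, hmulS, if_pos rfl]
    rw [h1, hPmat, Finset.mul_sum, Finset.sum_mul]
    refine Finset.sum_congr rfl fun s _ => ?_
    rw [Matrix.mul_vecMulVec, Matrix.vecMulVec_mul]
    rw [Matrix.star_mulVec, hstarS]

open Matrix in
/-- a unital `ℂ`-algebra `*`-homomorphism between complex matrix
algebras is unitarily equivalent to a direct sum of copies of the identity
representation. -/
theorem star_algHom_matrix_eq_copies_of_identity
    (n m : ℕ) (hn : 1 ≤ n) (hm : 1 ≤ m)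
    (π : Matrix (Fin n) (Fin n) ℂ →ₐ[ℂ] Matrix (Fin m) (Fin m) ℂ)
    (hstar : ∀ α : Matrix (Fin n) (Fin n) ℂ, π αᴴ = (π α)ᴴ) :
    n ∣ m ∧
    ∃ U ∈ Matrix.unitaryGroup (Fin m) ℂ,
      ∃ e : Fin (m / n) × Fin n ≃ Fin m,
        ∀ α : Matrix (Fin n) (Fin n) ℂ,
          π α = U * (Matrix.reindex ((Equiv.prodComm (Fin n) (Fin (m / n))).trans e)
              ((Equiv.prodComm (Fin n) (Fin (m / n))).trans e)
              (Matrix.blockDiagonal fun _ : Fin (m / n) => α)) * Uᴴ := by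
  obtain ⟨k, u, hu, hSu⟩ := aux_exists_u n m hn π hstar
  have hone : (1 : Matrix (Fin m) (Fin m) ℂ)
      = ∑ i : Fin n, ∑ s : Fin k, vecMulVec (u (i, s)) (star (u (i, s))) := by
    calc (1 : Matrix (Fin m) (Fin m) ℂ) = π 1 := (_root_.map_one π).symm
      _ = π (∑ i : Fin n, Matrix.single i i 1) := by rw [sum_stdBasis_diag]
      _ = ∑ i : Fin n, π (Matrix.single i i 1) := map_sum _ _ _
      _ = _ := Finset.sum_congr rfl fun i _ => hSu i i
  have htr : (m : ℂ) = ((n * k : ℕ) : ℂ) := by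
    have h1 := congrArg Matrix.trace hone
    rw [Matrix.trace_one] at h1
    have h2 : ∀ p : Fin n × Fin k,
        Matrix.trace (vecMulVec (u p) (star (u p))) = star (u p) ⬝ᵥ u p := by
      intro p
      simp [Matrix.trace, Matrix.diag, vecMulVec_apply, dotProduct, mul_comm]
    rw [Matrix.trace_sum] at h1
    simp only [Matrix.trace_sum] at h1
    rw [Fintype.card_fin] at h1
    push_cast
    rw [h1]
    calc ∑ i : Fin n, ∑ s : Fin k, Matrix.trace (vecMulVec (u (i, s)) (star (u (i, s))))
        = ∑ i : Fin n, ∑ s : Fin k, (1 : ℂ) := by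
          refine Finset.sum_congr rfl fun i _ => Finset.sum_congr rfl fun s _ => ?_
          rw [h2 (i, s), hu (i, s) (i, s), if_pos rfl]
      _ = (n : ℂ) * (k : ℂ) := by simp [mul_comm]
  have hnk : m = n * k := by exact_mod_cast htr
  have hdvd : n ∣ m := ⟨k, hnk⟩
  have hk : m / n = k := by rw [hnk, Nat.mul_div_cancel_left _ hn]
  subst hk
  refine ⟨hdvd, ?_⟩
  have hnm : n * (m / n) = m := hnk.symm
  set e : Fin (m / n) × Fin n ≃ Fin m :=
    (Equiv.prodComm _ _).trans (finProdFinEquiv.trans (finCongr hnm)) with he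
  set c : Fin n × Fin (m / n) ≃ Fin m :=
    (Equiv.prodComm (Fin n) (Fin (m / n))).trans e with hc
  set U : Matrix (Fin m) (Fin m) ℂ := Matrix.of fun x y => u (c.symm y) x with hU
  refine ⟨U, ?_, e, ?_⟩
  · rw [Matrix.mem_unitaryGroup_iff']
    ext z w
    rw [Matrix.mul_apply, Matrix.one_apply]
    calc ∑ x, (star U) z x * U x w = star (u (c.symm z)) ⬝ᵥ u (c.symm w) := by
          refine Finset.sum_congr rfl fun x _ => ?_
          simp [hU, Matrix.star_apply]
      _ = if z = w then 1 else 0 := by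
          rw [hu]
          simp
  · intro α
    have hπ : π α = ∑ i : Fin n, ∑ j : Fin n, ∑ s : Fin (m / n),
        α i j • vecMulVec (u (i, s)) (star (u (j, s))) := by
      conv_lhs => rw [matrix_eq_sum_single α]
      rw [map_sum]
      refine Finset.sum_congr rfl fun i _ => ?_
      rw [map_sum]
      refine Finset.sum_congr rfl fun j _ => ?_
      have h5 : Matrix.single i j (α i j) = α i j • Matrix.single i j (1 : ℂ) := by
        rw [smul_single, smul_eq_mul, mul_one]
      rw [h5, _root_.map_smul, hSu, Finset.smul_sum]
    have hπ' : π α = ∑ p : Fin n × Fin (m / n), ∑ q : Fin n × Fin (m / n),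
        (if p.2 = q.2 then α p.1 q.1 else (0 : ℂ)) • vecMulVec (u p) (star (u q)) := by
      rw [hπ]
      rw [Fintype.sum_prod_type]
      refine Eq.symm ?_
      calc ∑ i : Fin n, ∑ s : Fin (m / n), ∑ q : Fin n × Fin (m / n),
            (if s = q.2 then α i q.1 else (0 : ℂ)) • vecMulVec (u (i, s)) (star (u q))
          = ∑ i : Fin n, ∑ s : Fin (m / n), ∑ j : Fin n,
            α i j • vecMulVec (u (i, s)) (star (u (j, s))) := by
            refine Finset.sum_congr rfl fun i _ => Finset.sum_congr rfl fun s _ => ?_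
            rw [Fintype.sum_prod_type]
            refine Finset.sum_congr rfl fun j _ => ?_
            simp [Finset.sum_ite_eq]
        _ = _ := by
            refine Finset.sum_congr rfl fun i _ => ?_
            exact Finset.sum_comm
    rw [hπ']
    ext x y
    have step1 : (U * (Matrix.reindex c c (Matrix.blockDiagonal fun _ : Fin (m / n) => α)) * Uᴴ) x y
        = ∑ w, ∑ z, U x z * (Matrix.reindex c c (Matrix.blockDiagonal fun _ : Fin (m / n) => α)) z w
            * (starRingEnd ℂ) (U y w) := by
      simp only [Matrix.mul_apply, Matrix.conjTranspose_apply, RCLike.star_def]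
      exact Finset.sum_congr rfl fun w _ => Finset.sum_mul _ _ _
    have step2 : ∀ w, ∑ z, U x z * (Matrix.reindex c c (Matrix.blockDiagonal fun _ : Fin (m / n) => α)) z w
            * (starRingEnd ℂ) (U y w)
        = ∑ p : Fin n × Fin (m / n), U x (c p)
            * (Matrix.reindex c c (Matrix.blockDiagonal fun _ : Fin (m / n) => α)) (c p) w
            * (starRingEnd ℂ) (U y w) := by
      intro w
      exact (Equiv.sum_comp c _).symm
    calc (∑ p : Fin n × Fin (m / n), ∑ q : Fin n × Fin (m / n),
            (if p.2 = q.2 then α p.1 q.1 else (0 : ℂ)) • vecMulVec (u p) (star (u q))) x y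
        = ∑ p : Fin n × Fin (m / n), ∑ q : Fin n × Fin (m / n),
            (if p.2 = q.2 then α p.1 q.1 else (0 : ℂ)) * (u p x * (starRingEnd ℂ) (u q y)) := by
          simp only [Matrix.sum_apply]
          refine Finset.sum_congr rfl fun p _ => Finset.sum_congr rfl fun q _ => ?_
          simp only [Matrix.smul_apply, vecMulVec_apply, smul_eq_mul, Pi.star_apply,
            RCLike.star_def]
      _ = ∑ q : Fin n × Fin (m / n), ∑ p : Fin n × Fin (m / n),
            U x (c p) * (Matrix.reindex c c (Matrix.blockDiagonal fun _ : Fin (m / n) => α)) (c p) (c q)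
              * (starRingEnd ℂ) (U y (c q)) := by
          rw [Finset.sum_comm]
          refine Finset.sum_congr rfl fun q _ => Finset.sum_congr rfl fun p _ => ?_
          simp only [hU, Matrix.of_apply, Equiv.symm_apply_apply, Matrix.reindex_apply,
            Matrix.submatrix_apply, Matrix.blockDiagonal_apply]
          ring
      _ = (U * (Matrix.reindex c c (Matrix.blockDiagonal fun _ : Fin (m / n) => α)) * Uᴴ) x y := by
          rw [step1, ← Equiv.sum_comp c
            (fun w => ∑ z, U x z * (Matrix.reindex c c (Matrix.blockDiagonal fun _ : Fin (m / n) => α)) z w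
              * (starRingEnd ℂ) (U y w))]
          exact Finset.sum_congr rfl fun q _ => (step2 (c q)).symm
end

section
/- Let n ≥ 1 and let Γ : M_n(ℂ) → M_m(ℂ) be a unital real star ring homomorphism. Then there exist p, q ∈ ℕ with (p + q)·n = m and a unitary U ∈ M_m(ℂ) such that for all α ∈ M_n(ℂ), Γ(α) = U · D(α) · Uᴴ, where D(α) ∈ M_m(ℂ) is the block-diagonal matrix whose diagonal blocks are p copies of α followed by q copies of the entrywise complex conjugate ᾱ, regarded as an m×m matrix via an identification of (Fin p ⊕ Fin q) × Fin n with Fin m. -/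
set_option maxHeartbeats 2000000 in
set_option synthInstance.maxHeartbeats 1000000 in
open Matrix in
/-- a unital real star ring homomorphism between complex matrix
algebras is unitarily equivalent to a direct sum of `p` copies of the identity
and `q` copies of the entrywise complex conjugation. -/
theorem real_star_ring_hom_matrix_characterisation
    (n m : ℕ) (hn : 1 ≤ n)
    (Γ : Matrix (Fin n) (Fin n) ℂ → Matrix (Fin m) (Fin m) ℂ)
    (hΓ : IsUnitalRealStarRingHom Γ) :
    ∃ (p q : ℕ), (p + q) * n = m ∧
      ∃ U ∈ Matrix.unitaryGroup (Fin m) ℂ,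
        ∃ e : (Fin p ⊕ Fin q) × Fin n ≃ Fin m,
          ∀ α : Matrix (Fin n) (Fin n) ℂ,
            Γ α = U * (Matrix.reindex
                ((Equiv.prodComm (Fin n) (Fin p ⊕ Fin q)).trans e)
                ((Equiv.prodComm (Fin n) (Fin p ⊕ Fin q)).trans e)
                (Matrix.blockDiagonal
                  (Sum.elim (fun _ : Fin p => α)
                    (fun _ : Fin q => α.map (starRingEnd ℂ))))) * Uᴴ := by
  classical
  obtain ⟨hadd, hmul, hone, hsmul, hstar⟩ := hΓ
  set z : Fin n := ⟨0, hn⟩ with hz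
  let Γ' : Matrix (Fin n) (Fin n) ℂ →+ Matrix (Fin m) (Fin m) ℂ := AddMonoidHom.mk' Γ hadd
  have hΓ'app : ∀ α, Γ' α = Γ α := fun _ => rfl
  have hneg : ∀ β, Γ (-β) = -Γ β := fun β => map_neg Γ' β
  set J : Matrix (Fin m) (Fin m) ℂ := Γ (Complex.I • 1) with hJdef
  have hJcomm : ∀ β, J * Γ β = Γ β * J := by
    intro β
    rw [hJdef, ← hmul, ← hmul, smul_mul_assoc, one_mul, mul_smul_comm, mul_one]
  have hΓI : ∀ β, Γ (Complex.I • β) = J * Γ β := by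
    intro β; rw [hJdef, ← hmul, smul_mul_assoc, one_mul]
  have hJJ : J * J = -1 := by
    rw [hJdef, ← hmul]
    have h1 : (Complex.I • 1 : Matrix (Fin n) (Fin n) ℂ) * (Complex.I • 1) = -1 := by
      rw [smul_mul_assoc, one_mul, smul_smul, Complex.I_mul_I, neg_one_smul]
    rw [h1, show (-1 : Matrix (Fin n) (Fin n) ℂ) = -(1) from rfl, hneg, hone]
  have hJH : Jᴴ = -J := by
    rw [hJdef, ← hstar, conjTranspose_smul, conjTranspose_one, Complex.star_def, Complex.conj_I,
      neg_smul, hneg]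
  have hΓsmul : ∀ (c : ℂ) (β), Γ (c • β) = c.re • Γ β + c.im • (J * Γ β) := by
    intro c β
    have h1 : c • β = (c.re : ℝ) • β + (c.im : ℝ) • (Complex.I • β) := by
      rw [(algebraMap_smul ℂ c.re β).symm, (algebraMap_smul ℂ c.im (Complex.I • β)).symm]
      simp only [Complex.coe_algebraMap, smul_smul]
      rw [← add_smul, Complex.re_add_im]
    rw [h1, hadd, hsmul, hsmul, hΓI]
  set P : Matrix (Fin m) (Fin m) ℂ := (2⁻¹ : ℂ) • (1 - Complex.I • J) with hPdef
  have hJP : J * P = Complex.I • P := by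
    rw [hPdef]
    simp only [mul_smul_comm, smul_smul, mul_sub, mul_one, hJJ]
    match_scalars <;> ring_nf <;> norm_num [Complex.I_sq]
  have hJP' : J * (1 - P) = (-Complex.I) • (1 - P) := by
    rw [mul_sub, mul_one, hJP, hPdef]
    match_scalars <;> ring_nf <;> norm_num [Complex.I_sq]
  -- matrix units
  have hstd : ∀ (a b : Fin n), (Matrix.single a b (1:ℂ))ᴴ = Matrix.single b a 1 := by
    intro a b
    ext i j
    simp [Matrix.single, conjTranspose_apply, and_comm, apply_ite]
  set E : Fin n → Matrix (Fin m) (Fin m) ℂ := fun t => Γ (Matrix.single t z 1) with hEdef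
  set F : Matrix (Fin m) (Fin m) ℂ := Γ (Matrix.single z z 1) with hFdef
  have hEz : E z = F := rfl
  have hEH : ∀ t, (E t)ᴴ = Γ (Matrix.single z t 1) := by
    intro t; rw [hEdef, ← hstar, hstd]
  have hEE : ∀ t t', (E t)ᴴ * E t' = if t = t' then F else 0 := by
    intro t t'
    rw [hEH, hEdef, ← hmul]
    by_cases h : t = t'
    · subst h
      rw [if_pos rfl, single_mul_single_same, one_mul, hFdef]
    · rw [if_neg h, single_mul_single_of_ne (h := h), ← hΓ'app, map_zero Γ']
  have hFH : Fᴴ = F := by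
    rw [hFdef, ← hstar, hstd]
  have hFF : F * F = F := by
    have h := hEE z z
    rw [if_pos rfl] at h
    calc F * F = Fᴴ * F := by rw [hFH]
      _ = (E z)ᴴ * E z := rfl
      _ = F := h
  have hFE' : ∀ t, F * (E t)ᴴ = (E t)ᴴ := by
    intro t
    rw [hEH, hFdef, ← hmul, single_mul_single_same, one_mul]
  have hJF : J * F = F * J := hJcomm _
  have hJE : ∀ t, J * E t = E t * J := fun t => hJcomm _
  have hdiag : ∑ t : Fin n, Matrix.single t t (1:ℂ) = 1 := by
    ext i j
    rw [Matrix.sum_apply]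
    simp [Matrix.single, one_apply, ite_and, Finset.sum_ite_eq, Finset.sum_ite_eq']
  have hsumE : ∑ t, E t * (E t)ᴴ = 1 := by
    have h1 : ∀ t, E t * (E t)ᴴ = Γ' (Matrix.single t t 1) := by
      intro t
      rw [hEH, show E t = Γ (Matrix.single t z 1) from rfl, ← hmul,
        single_mul_single_same, one_mul, hΓ'app]
    calc ∑ t, E t * (E t)ᴴ = ∑ t, Γ' (Matrix.single t t 1) := by
          simp only [h1]
      _ = Γ' (∑ t, Matrix.single t t 1) := (map_sum Γ' _ _).symm
      _ = 1 := by rw [hdiag, hΓ'app, hone]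
  -- projections
  set Qp : Matrix (Fin m) (Fin m) ℂ := F * P with hQpdef
  set Qm : Matrix (Fin m) (Fin m) ℂ := F * (1 - P) with hQmdef
  have hFQp : F * Qp = Qp := by rw [hQpdef, ← mul_assoc, hFF]
  have hFQm : F * Qm = Qm := by rw [hQmdef, ← mul_assoc, hFF]
  have hJQp : J * Qp = Complex.I • Qp := by
    rw [hQpdef, ← mul_assoc, hJF, mul_assoc, hJP, mul_smul_comm]
  have hJQm : J * Qm = (-Complex.I) • Qm := by
    rw [hQmdef, ← mul_assoc, hJF, mul_assoc, hJP', mul_smul_comm]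
  have hQpQm : Qp + Qm = F := by
    rw [hQpdef, hQmdef, ← mul_add, add_sub_cancel, mul_one]
  -- Euclidean space set-up
  set ι : (Fin m → ℂ) → EuclideanSpace ℂ (Fin m) :=
    fun x => (WithLp.equiv 2 (Fin m → ℂ)).symm x with hιdef
  set L : Matrix (Fin m) (Fin m) ℂ → (EuclideanSpace ℂ (Fin m) →ₗ[ℂ] EuclideanSpace ℂ (Fin m)) :=
    fun A => Matrix.toEuclideanLin A with hLdef
  have hadj : ∀ (A : Matrix (Fin m) (Fin m) ℂ) (x y : EuclideanSpace ℂ (Fin m)),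
      (inner ℂ (ι (A *ᵥ x)) y : ℂ) = inner ℂ x (ι (Aᴴ *ᵥ y)) := by
    intro A x y
    rw [EuclideanSpace.inner_eq_star_dotProduct, EuclideanSpace.inner_eq_star_dotProduct]
    show y ⬝ᵥ star (A *ᵥ x) = (Aᴴ *ᵥ y) ⬝ᵥ star x
    rw [dotProduct_comm, star_mulVec, dotProduct_comm (Aᴴ *ᵥ y), dotProduct_mulVec]
  set Sp : Submodule ℂ (EuclideanSpace ℂ (Fin m)) := LinearMap.range (L Qp) with hSpdef
  set Sm : Submodule ℂ (EuclideanSpace ℂ (Fin m)) := LinearMap.range (L Qm) with hSmdef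
  set p : ℕ := Module.finrank ℂ Sp with hpdef
  set q : ℕ := Module.finrank ℂ Sm with hqdef
  set bp : OrthonormalBasis (Fin p) ℂ Sp := stdOrthonormalBasis ℂ Sp with hbpdef
  set bq : OrthonormalBasis (Fin q) ℂ Sm := stdOrthonormalBasis ℂ Sm with hbqdef
  set v : Fin p ⊕ Fin q → EuclideanSpace ℂ (Fin m) :=
    Sum.elim (fun a => (bp a : EuclideanSpace ℂ (Fin m)))
      (fun b => (bq b : EuclideanSpace ℂ (Fin m))) with hvdef
  set ε : Fin p ⊕ Fin q → ℂ := Sum.elim (fun _ => Complex.I) (fun _ => -Complex.I) with hεdef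
  -- membership facts
  have hSpF : ∀ x : EuclideanSpace ℂ (Fin m), x ∈ Sp → F *ᵥ x = x ∧ J *ᵥ x = Complex.I • x := by
    rintro x ⟨y, rfl⟩
    constructor
    · show F *ᵥ (Qp *ᵥ y) = Qp *ᵥ y
      rw [mulVec_mulVec, hFQp]
    · show J *ᵥ (Qp *ᵥ y) = Complex.I • (Qp *ᵥ y)
      rw [mulVec_mulVec, hJQp, smul_mulVec]
  have hSmF : ∀ x : EuclideanSpace ℂ (Fin m), x ∈ Sm → F *ᵥ x = x ∧ J *ᵥ x = (-Complex.I) • x := by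
    rintro x ⟨y, rfl⟩
    constructor
    · show F *ᵥ (Qm *ᵥ y) = Qm *ᵥ y
      rw [mulVec_mulVec, hFQm]
    · show J *ᵥ (Qm *ᵥ y) = (-Complex.I) • (Qm *ᵥ y)
      rw [mulVec_mulVec, hJQm, smul_mulVec]
  have hvF : ∀ s, F *ᵥ v s = (v s : Fin m → ℂ) := by
    rintro (a | b)
    · exact (hSpF _ (bp a).2).1
    · exact (hSmF _ (bq b).2).1
  have hvJ : ∀ s, J *ᵥ v s = ε s • (v s : Fin m → ℂ) := by
    rintro (a | b)
    · exact (hSpF _ (bp a).2).2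
    · exact (hSmF _ (bq b).2).2
  -- inner products of the v's
  have hvinner : ∀ s s', (inner ℂ (v s) (v s') : ℂ) = if s = s' then 1 else 0 := by
    have hmixed : ∀ s s', ε s = Complex.I → ε s' = -Complex.I →
        (inner ℂ (v s) (v s') : ℂ) = 0 := by
      intro s s' hs hs'
      have h1 : (inner ℂ (ι (J *ᵥ v s)) (v s') : ℂ)
          = (starRingEnd ℂ) (ε s) * inner ℂ (v s) (v s') := by
        have h0 : ι (J *ᵥ v s) = ε s • v s := by rw [hvJ s]; rfl
        rw [h0, inner_smul_left]
      have h2 : (inner ℂ (ι (J *ᵥ v s)) (v s') : ℂ) = - (ε s' * inner ℂ (v s) (v s')) := by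
        rw [hadj, hJH]
        have h0 : ι ((-J) *ᵥ v s') = -(ε s' • v s') := by
          rw [neg_mulVec, hvJ]; rfl
        rw [h0, inner_neg_right, inner_smul_right]
      rw [hs] at h1
      rw [hs'] at h2
      rw [h1] at h2
      simp only [Complex.star_def, Complex.conj_I] at h2
      have h3 : (2 * Complex.I) * (inner ℂ (v s) (v s') : ℂ) = 0 := by
        linear_combination -h2
      rcases mul_eq_zero.mp h3 with h4 | h4
      · exact absurd h4 (by simp [Complex.ext_iff])
      · exact h4
    rintro (a | a') (b | b')
    · simp only [hvdef, Sum.elim_inl, ← Submodule.coe_inner,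
        orthonormal_iff_ite.mp bp.orthonormal a b, Sum.inl.injEq]
    · rw [hmixed (Sum.inl a) (Sum.inr b') rfl rfl]
      simp
    · rw [← inner_conj_symm, hmixed (Sum.inl b) (Sum.inr a') rfl rfl]
      simp
    · simp only [hvdef, Sum.elim_inr, ← Submodule.coe_inner,
        orthonormal_iff_ite.mp bq.orthonormal a' b', Sum.inr.injEq]
  -- the orthonormal family u (and its plain-function twin w)
  set w : (Fin p ⊕ Fin q) × Fin n → (Fin m → ℂ) :=
    fun st => E st.2 *ᵥ v st.1 with hwdef
  set u : (Fin p ⊕ Fin q) × Fin n → EuclideanSpace ℂ (Fin m) :=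
    fun st => ι (w st) with hudef
  have huinner : ∀ x y, (inner ℂ (u x) (u y) : ℂ) = if x = y then 1 else 0 := by
    rintro ⟨s, t⟩ ⟨s', t'⟩
    show (inner ℂ (ι (E t *ᵥ v s)) (ι (E t' *ᵥ v s')) : ℂ) = _
    rw [hadj]
    have h1 : ι ((E t)ᴴ *ᵥ (ι (E t' *ᵥ v s'))) = ι (((E t)ᴴ * E t') *ᵥ v s') := by
      show ι ((E t)ᴴ *ᵥ (E t' *ᵥ v s')) = _
      rw [mulVec_mulVec]
    rw [h1, hEE]
    by_cases h : t = t'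
    · subst h
      rw [if_pos rfl]
      have h2 : ι (F *ᵥ v s') = v s' := by rw [hvF]; rfl
      rw [h2, hvinner]
      by_cases hs : s = s'
      · subst hs; simp
      · simp [hs, Prod.ext_iff]
    · rw [if_neg h]
      have h2 : ι ((0 : Matrix (Fin m) (Fin m) ℂ) *ᵥ v s') = 0 := by
        rw [zero_mulVec]; rfl
      rw [h2, inner_zero_right, if_neg (by simp [Prod.ext_iff, h])]
  have horth : Orthonormal ℂ u := orthonormal_iff_ite.mpr huinner
  -- spanning
  have hstep : ∀ (t : Fin n) (y : EuclideanSpace ℂ (Fin m)),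
      (y ∈ Sp ∨ y ∈ Sm) → L (E t) y ∈ Submodule.span ℂ (Set.range u) := by
    rintro t y (hy | hy)
    · have h2 : y = ∑ a, bp.repr ⟨y, hy⟩ a • ((bp a : EuclideanSpace ℂ (Fin m))) := by
        conv_lhs => rw [show y = ((⟨y, hy⟩ : Sp) : EuclideanSpace ℂ (Fin m)) from rfl,
          ← bp.sum_repr ⟨y, hy⟩]
        push_cast
        rfl
      rw [h2, map_sum]
      refine Submodule.sum_mem _ fun a _ => ?_
      rw [_root_.map_smul]
      exact Submodule.smul_mem _ _ (Submodule.subset_span ⟨(Sum.inl a, t), rfl⟩)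
    · have h2 : y = ∑ b, bq.repr ⟨y, hy⟩ b • ((bq b : EuclideanSpace ℂ (Fin m))) := by
        conv_lhs => rw [show y = ((⟨y, hy⟩ : Sm) : EuclideanSpace ℂ (Fin m)) from rfl,
          ← bq.sum_repr ⟨y, hy⟩]
        push_cast
        rfl
      rw [h2, map_sum]
      refine Submodule.sum_mem _ fun b _ => ?_
      rw [_root_.map_smul]
      exact Submodule.smul_mem _ _ (Submodule.subset_span ⟨(Sum.inr b, t), rfl⟩)
  have hsumMulVec : ∀ (M : Fin n → Matrix (Fin m) (Fin m) ℂ) (x : Fin m → ℂ),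
      (∑ t, M t) *ᵥ x = ∑ t, M t *ᵥ x := by
    intro M x
    ext i
    simp only [Matrix.mulVec, dotProduct, Matrix.sum_apply, Finset.sum_apply, Finset.sum_mul]
    exact Finset.sum_comm
  have hspan : ⊤ ≤ Submodule.span ℂ (Set.range u) := by
    intro x _
    have hx : x = ∑ t, L (E t) (L Qp (ι ((E t)ᴴ *ᵥ x)) + L Qm (ι ((E t)ᴴ *ᵥ x))) := by
      have h1 : ∀ t, L Qp (ι ((E t)ᴴ *ᵥ x)) + L Qm (ι ((E t)ᴴ *ᵥ x)) = ι ((E t)ᴴ *ᵥ x) := by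
        intro t
        show WithLp.toLp 2 (Qp *ᵥ ((E t)ᴴ *ᵥ x)) + WithLp.toLp 2 (Qm *ᵥ ((E t)ᴴ *ᵥ x))
          = WithLp.toLp 2 ((E t)ᴴ *ᵥ x)
        rw [← WithLp.toLp_add, ← add_mulVec, hQpQm, mulVec_mulVec, hFE']
      have h2 : ∀ t, L (E t) (ι ((E t)ᴴ *ᵥ x)) = ι ((E t * (E t)ᴴ) *ᵥ x) := by
        intro t
        show WithLp.toLp 2 (E t *ᵥ ((E t)ᴴ *ᵥ x)) = WithLp.toLp 2 ((E t * (E t)ᴴ) *ᵥ x)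
        rw [mulVec_mulVec]
      simp only [h1, h2]
      show x = ∑ t, WithLp.toLp 2 ((E t * (E t)ᴴ) *ᵥ x)
      rw [← WithLp.toLp_sum, ← hsumMulVec, hsumE, one_mulVec]
    rw [hx]
    refine Submodule.sum_mem _ fun t _ => ?_
    rw [map_add]
    exact Submodule.add_mem _
      (hstep t _ (Or.inl (LinearMap.mem_range_self _ _)))
      (hstep t _ (Or.inr (LinearMap.mem_range_self _ _)))
  set ob : OrthonormalBasis ((Fin p ⊕ Fin q) × Fin n) ℂ (EuclideanSpace ℂ (Fin m)) :=
    OrthonormalBasis.mk horth hspan with hobdef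
  have hcard : Fintype.card ((Fin p ⊕ Fin q) × Fin n) = m := by
    have h1 := Module.finrank_eq_card_basis ob.toBasis
    rw [finrank_euclideanSpace_fin] at h1
    exact h1.symm
  have hpq : (p + q) * n = m := by
    simpa [Fintype.card_prod, Fintype.card_sum] using hcard
  set e : ((Fin p ⊕ Fin q) × Fin n) ≃ Fin m := Fintype.equivFinOfCardEq hcard with hedef
  set U : Matrix (Fin m) (Fin m) ℂ := Matrix.of (fun i j => u (e.symm j) i) with hUdef
  have hUmem : U ∈ Matrix.unitaryGroup (Fin m) ℂ := by
    rw [Matrix.mem_unitaryGroup_iff']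
    ext j k
    have h1 : (star U * U) j k = ∑ i, star (u (e.symm j) i) * (u (e.symm k) i) := by
      simp [Matrix.mul_apply, Matrix.star_apply, hUdef]
    have h2 := huinner (e.symm j) (e.symm k)
    rw [PiLp.inner_apply] at h2
    simp only [RCLike.inner_apply', starRingEnd_apply] at h2
    rw [h1, h2, Matrix.one_apply]
    by_cases h : j = k <;> simp [h, EmbeddingLike.apply_eq_iff_eq]
  -- the key computation
  have hexp : ∀ (α : Matrix (Fin n) (Fin n) ℂ) (t : Fin n),
      α * Matrix.single t z 1 = ∑ t', α t' t • Matrix.single t' z 1 := by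
    intro α t
    ext i j
    simp [mul_apply, Matrix.sum_apply, Matrix.single, ite_and, mul_comm]
  have key : ∀ (α : Matrix (Fin n) (Fin n) ℂ) (s : Fin p ⊕ Fin q) (t t' : Fin n) (i : Fin m),
      (Γ α *ᵥ w (s, t)) i =
        ∑ t', (Sum.elim (fun _ : Fin p => α) (fun _ : Fin q => α.map (starRingEnd ℂ)) s) t' t
          * w (s, t') i := by
    intro α s t _ i
    have h0 : Γ α *ᵥ w (s, t) = (Γ α * E t) *ᵥ v s := by
      show Γ α *ᵥ (E t *ᵥ v s) = _
      rw [mulVec_mulVec]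
    have h1 : Γ α * E t = ∑ t', Γ' ((α t' t) • Matrix.single t' z 1) := by
      rw [hEdef, ← hmul, hexp, ← hΓ'app, map_sum Γ']
    have h2 : ∀ (t' : Fin n) (c : ℂ), Γ (c • Matrix.single t' z 1) *ᵥ v s
        = ((c.re : ℂ) + (c.im : ℂ) * ε s) • w (s, t') := by
      intro t' c
      rw [hΓsmul]
      have hre : (c.re • (Γ (Matrix.single t' z 1)) : Matrix (Fin m) (Fin m) ℂ)
          = (c.re : ℂ) • E t' := (algebraMap_smul ℂ c.re (E t')).symm
      have him : (c.im • (J * Γ (Matrix.single t' z 1)) : Matrix (Fin m) (Fin m) ℂ)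
          = (c.im : ℂ) • (J * E t') := (algebraMap_smul ℂ c.im (J * E t')).symm
      rw [hre, him, add_mulVec, smul_mulVec, smul_mulVec, hJE, ← mulVec_mulVec,
        hvJ, mulVec_smul]
      show _ = ((c.re : ℂ) + (c.im : ℂ) * ε s) • (E t' *ᵥ v s)
      rw [add_smul, smul_smul]
    rw [h0, h1, hsumMulVec, Finset.sum_apply]
    refine Finset.sum_congr rfl fun t' _ => ?_
    rw [hΓ'app, h2]
    have h3 : ((α t' t).re : ℂ) + ((α t' t).im : ℂ) * ε s
        = (Sum.elim (fun _ : Fin p => α) (fun _ : Fin q => α.map (starRingEnd ℂ)) s) t' t := by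
      rcases s with a | b
      · simp only [hεdef, Sum.elim_inl, Complex.re_add_im]
      · simp only [hεdef, Sum.elim_inr, Sum.elim_inr, Matrix.map_apply]
        apply Complex.ext <;> simp
    rw [h3]
    rfl
  -- conclusion
  refine ⟨p, q, hpq, U, hUmem, e, ?_⟩
  intro α
  set D : Matrix (Fin m) (Fin m) ℂ := (Matrix.reindex
      ((Equiv.prodComm (Fin n) (Fin p ⊕ Fin q)).trans e)
      ((Equiv.prodComm (Fin n) (Fin p ⊕ Fin q)).trans e)
      (Matrix.blockDiagonal
        (Sum.elim (fun _ : Fin p => α)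
          (fun _ : Fin q => α.map (starRingEnd ℂ))))) with hDdef
  have hGU : Γ α * U = U * D := by
    ext i j
    obtain ⟨⟨s, t⟩, hst⟩ : ∃ st, e.symm j = st := ⟨_, rfl⟩
    have hj : j = e (s, t) := by rw [← hst, Equiv.apply_symm_apply]
    have hL1 : (Γ α * U) i j = (Γ α *ᵥ w (s, t)) i := by
      rw [Matrix.mul_apply]
      simp only [hUdef, Matrix.of_apply, hst]
      rfl
    have hDval : ∀ (s' : Fin p ⊕ Fin q) (t' : Fin n),
        D (e (s', t')) j = if s' = s then
          (Sum.elim (fun _ : Fin p => α) (fun _ : Fin q => α.map (starRingEnd ℂ)) s') t' t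
          else 0 := by
      intro s' t'
      rw [hDdef, hj, Matrix.reindex_apply, Matrix.submatrix_apply]
      simp only [Equiv.symm_trans_apply, Equiv.symm_apply_apply, Equiv.prodComm_symm,
        Equiv.prodComm_apply, Prod.swap_prod_mk]
      rw [Matrix.blockDiagonal_apply]
    have hR1 : (U * D) i j = ∑ t', w (s, t') i *
        (Sum.elim (fun _ : Fin p => α) (fun _ : Fin q => α.map (starRingEnd ℂ)) s) t' t := by
      rw [Matrix.mul_apply, ← Equiv.sum_comp e (fun k => U i k * D k j), Fintype.sum_prod_type]
      have hU1 : ∀ (x : (Fin p ⊕ Fin q) × Fin n), U i (e x) = w x i := by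
        intro x
        simp only [hUdef, Matrix.of_apply, Equiv.symm_apply_apply]
        rfl
      calc ∑ s', ∑ t', U i (e (s', t')) * D (e (s', t')) j
          = ∑ s', ∑ t', w (s', t') i * (if s' = s then
            (Sum.elim (fun _ : Fin p => α) (fun _ : Fin q => α.map (starRingEnd ℂ)) s') t' t
            else 0) := by
            refine Finset.sum_congr rfl fun s' _ => Finset.sum_congr rfl fun t' _ => ?_
            rw [hU1, hDval]
        _ = ∑ s', if s' = s then (∑ t', w (s', t') i *
            (Sum.elim (fun _ : Fin p => α) (fun _ : Fin q => α.map (starRingEnd ℂ)) s') t' t)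
            else 0 := by
            refine Finset.sum_congr rfl fun s' _ => ?_
            by_cases h : s' = s <;> simp [h]
        _ = ∑ t', w (s, t') i *
            (Sum.elim (fun _ : Fin p => α) (fun _ : Fin q => α.map (starRingEnd ℂ)) s) t' t := by
            rw [Finset.sum_ite_eq' Finset.univ s]
            simp
    rw [hL1, hR1, key α s t t]
    refine Finset.sum_congr rfl fun t' _ => ?_
    ring
  have hUU' : U * Uᴴ = 1 := by
    have h := Matrix.mem_unitaryGroup_iff.mp hUmem
    rwa [Matrix.star_eq_conjTranspose] at h
  calc Γ α = Γ α * (U * Uᴴ) := by rw [hUU', mul_one]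
    _ = (Γ α * U) * Uᴴ := by rw [mul_assoc]
    _ = U * D * Uᴴ := by rw [hGU]
end

section
/- Let n ≥ 1 and let Γ : M_n(ℂ) → M_n(ℂ) be a unital real star ring homomorphism. Then there exists a unitary U ∈ M_n(ℂ) such that either Γ(α) = U · α · Uᴴ for all α, or Γ(α) = U · ᾱ · Uᴴ for all α, where ᾱ is the entrywise complex conjugate of α. -/
open Matrix in
/-- a unital real star ring endomorphism of a complex matrix
algebra is either a unitary conjugation or a unitary conjugation composed with
entrywise complex conjugation. -/
theorem real_star_ring_endomorphism_matrix_characterisation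
    (n : ℕ) (hn : 1 ≤ n)
    (Γ : Matrix (Fin n) (Fin n) ℂ → Matrix (Fin n) (Fin n) ℂ)
    (hΓ : IsUnitalRealStarRingHom Γ) :
    ∃ U ∈ Matrix.unitaryGroup (Fin n) ℂ,
      (∀ α : Matrix (Fin n) (Fin n) ℂ, Γ α = U * α * Uᴴ) ∨
      (∀ α : Matrix (Fin n) (Fin n) ℂ, Γ α = U * α.map (starRingEnd ℂ) * Uᴴ) := by
  obtain ⟨hadd, hmul, hone, hsmul, hstar⟩ := hΓ
  have z : Fin n := ⟨0, hn⟩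
  -- basic additive facts
  have hzero : Γ 0 = 0 := by
    have h := hadd 0 0
    rw [add_zero] at h
    exact (left_eq_add.mp h)
  have hneg : ∀ x, Γ (-x) = -Γ x := by
    intro x
    have h := hadd x (-x)
    rw [add_neg_cancel, hzero] at h
    exact eq_neg_of_add_eq_zero_right h.symm
  set Γ' : Matrix (Fin n) (Fin n) ℂ →+ Matrix (Fin n) (Fin n) ℂ :=
    AddMonoidHom.mk' Γ hadd with hΓ'
  have hsum : ∀ (f : Fin n → Matrix (Fin n) (Fin n) ℂ),
      Γ (∑ i, f i) = ∑ i, Γ (f i) := fun f => map_sum Γ' f Finset.univ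
  -- matrix units
  set E : Fin n → Fin n → Matrix (Fin n) (Fin n) ℂ :=
    fun j k => Matrix.single j k (1 : ℂ) with hE
  set F : Fin n → Fin n → Matrix (Fin n) (Fin n) ℂ := fun j k => Γ (E j k) with hF
  have hEmul_same : ∀ j k m, E j k * E k m = E j m := by
    intro j k m
    simp only [hE]
    rw [Matrix.single_mul_single_same, one_mul]
  have hEmul_ne : ∀ (j : Fin n) {k l : Fin n} (m : Fin n), k ≠ l → E j k * E l m = 0 := by
    intro j k l m h
    simp only [hE]
    exact Matrix.single_mul_single_of_ne (1:ℂ) j k l h 1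
  have hEstar : ∀ j k, (E j k)ᴴ = E k j := by
    intro j k
    ext p q
    simp [hE, Matrix.single, conjTranspose_apply, and_comm, apply_ite]
  have hEsum : ∑ j, E j j = 1 := by
    simp only [hE]
    ext p q
    rw [Matrix.sum_apply]
    rcases eq_or_ne p q with rfl | hpq
    · rw [Matrix.one_apply_eq]
      rw [Finset.sum_eq_single p (fun c _ hc => by simp [hc]) (by simp)]
      simp
    · rw [Matrix.one_apply_ne hpq]
      exact Finset.sum_eq_zero fun c _ => by
        by_cases hcp : c = p
        · subst hcp; simp [hpq]
        · simp [hcp]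
  have hFmul_same : ∀ j k m, F j k * F k m = F j m := by
    intro j k m
    simp only [hF]
    rw [← hmul, hEmul_same]
  have hFmul_ne : ∀ (j : Fin n) {k l : Fin n} (m : Fin n), k ≠ l → F j k * F l m = 0 := by
    intro j k l m h
    simp only [hF]
    rw [← hmul, hEmul_ne j m h, hzero]
  have hFstar : ∀ j k, (F j k)ᴴ = F k j := by
    intro j k
    simp only [hF]
    rw [← hstar, hEstar]
  -- F z z is nonzero
  have hFzz : F z z ≠ 0 := by
    intro h0
    have hFjj : ∀ j, F j j = (0 : Matrix (Fin n) (Fin n) ℂ) := by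
      intro j
      have h1 : F j j = F j z * F z z * F z j := by
        rw [hFmul_same, hFmul_same]
      rw [h1, h0, mul_zero, zero_mul]
    have h1 : (1 : Matrix (Fin n) (Fin n) ℂ) = 0 := by
      rw [← hone, ← hEsum, hsum]
      exact Finset.sum_eq_zero fun j _ => hFjj j
    have h2 := congrFun (congrFun h1 z) z
    simp [Matrix.one_apply] at h2
  -- find a fixed unit vector of F z z
  obtain ⟨a, b, hab⟩ : ∃ a b, F z z a b ≠ 0 := by
    by_contra h
    push_neg at h
    exact hFzz (by ext p q; simp [h])
  set v0 : Fin n → ℂ := F z z *ᵥ Pi.single b 1 with hv0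
  have hv0a : v0 a = F z z a b := by
    simp [hv0, mulVec, dotProduct, Pi.single_apply]
  have hv0fix : F z z *ᵥ v0 = v0 := by
    rw [hv0, mulVec_mulVec, hFmul_same]
  -- normalisation
  set d : ℝ := ∑ i, Complex.normSq (v0 i) with hd
  have hdpos : 0 < d := by
    have h1 : 0 < Complex.normSq (v0 a) := Complex.normSq_pos.mpr (hv0a ▸ hab)
    have h2 : ∀ i ∈ Finset.univ, 0 ≤ Complex.normSq (v0 i) := fun i _ => Complex.normSq_nonneg _
    exact lt_of_lt_of_le h1 (Finset.single_le_sum h2 (Finset.mem_univ a))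
  set r : ℝ := Real.sqrt d with hr
  have hrpos : 0 < r := Real.sqrt_pos.mpr hdpos
  set v : Fin n → ℂ := ((r : ℂ))⁻¹ • v0 with hv
  have hvfix : F z z *ᵥ v = v := by
    rw [hv, mulVec_smul, hv0fix]
  have hvnorm : star v ⬝ᵥ v = 1 := by
    have hdot : star v0 ⬝ᵥ v0 = (d : ℂ) := by
      simp only [dotProduct, Pi.star_apply, hd, Complex.ofReal_sum]
      refine Finset.sum_congr rfl fun i _ => ?_
      rw [Complex.normSq_eq_conj_mul_self]
      rfl
    have hsm : star v ⬝ᵥ v = ((r : ℂ))⁻¹ * ((r : ℂ))⁻¹ * (star v0 ⬝ᵥ v0) := by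
      rw [hv, star_smul, smul_dotProduct, dotProduct_smul]
      simp [Complex.conj_ofReal, mul_assoc]
    have hrr : (r : ℂ) * (r : ℂ) = (d : ℂ) := by
      rw [← Complex.ofReal_mul, Real.mul_self_sqrt hdpos.le]
    have hrne : (r : ℂ) ≠ 0 := by simpa using hrpos.ne'
    rw [hsm, hdot, ← hrr]
    field_simp
  -- the unitary
  set U : Matrix (Fin n) (Fin n) ℂ := Matrix.of (fun p m => (F m z *ᵥ v) p) with hU
  have hUapp : ∀ p m, U p m = (F m z *ᵥ v) p := fun p m => rfl
  have hUU : Uᴴ * U = 1 := by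
    ext j k
    have e1 : (Uᴴ * U) j k = star (F j z *ᵥ v) ⬝ᵥ (F k z *ᵥ v) := by
      simp [Matrix.mul_apply, conjTranspose_apply, hUapp, dotProduct]
    rw [e1, star_mulVec, dotProduct_mulVec, vecMul_vecMul, ← dotProduct_mulVec, hFstar]
    rcases eq_or_ne j k with rfl | hjk
    · rw [hFmul_same, hvfix, hvnorm, Matrix.one_apply_eq]
    · rw [hFmul_ne _ _ hjk, Matrix.one_apply_ne hjk]
      simp
  have hUUd : U * Uᴴ = 1 := mul_eq_one_comm.mp hUU
  have hUmem : U ∈ Matrix.unitaryGroup (Fin n) ℂ := by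
    rw [Matrix.mem_unitaryGroup_iff', Matrix.star_eq_conjTranspose]
    exact hUU
  -- intertwining property
  have hFU : ∀ j k, F j k * U = U * E j k := by
    intro j k
    ext p m
    have e1 : (F j k * U) p m = ((F j k * F m z) *ᵥ v) p := by
      rw [← mulVec_mulVec]
      simp [Matrix.mul_apply, mulVec, dotProduct, hUapp]
    rcases eq_or_ne m k with rfl | hmk
    · have e2 : (U * E j m) p m = U p j * 1 := by
        simp only [hE]
        exact Matrix.mul_single_apply_same (1:ℂ) j m p U
      rw [e1, hFmul_same, e2, mul_one, hUapp]
    · have e2 : (U * E j k) p m = 0 := by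
        simp only [hE]
        exact Matrix.mul_single_apply_of_ne (1:ℂ) j k p m hmk U
      rw [e1, hFmul_ne _ _ fun h => hmk h.symm, e2]
      simp
  have hUF : ∀ j k, Uᴴ * F j k = E j k * Uᴴ := by
    intro j k
    calc Uᴴ * F j k = Uᴴ * F j k * (U * Uᴴ) := by rw [hUUd, mul_one]
      _ = Uᴴ * (F j k * U) * Uᴴ := by simp only [mul_assoc]
      _ = Uᴴ * (U * E j k) * Uᴴ := by rw [hFU]
      _ = (Uᴴ * U) * E j k * Uᴴ := by simp only [mul_assoc]
      _ = E j k * Uᴴ := by rw [hUU, one_mul]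
  have hΓE : ∀ j k, F j k = U * E j k * Uᴴ := by
    intro j k
    calc F j k = F j k * (U * Uᴴ) := by rw [hUUd, mul_one]
      _ = (F j k * U) * Uᴴ := by rw [mul_assoc]
      _ = U * E j k * Uᴴ := by rw [hFU]
  -- the image of i•1
  set J : Matrix (Fin n) (Fin n) ℂ := Γ (Complex.I • 1) with hJdef
  have hIE : ∀ j k, (Complex.I • (1 : Matrix (Fin n) (Fin n) ℂ)) * E j k
      = E j k * (Complex.I • (1 : Matrix (Fin n) (Fin n) ℂ)) := by
    intro j k
    rw [smul_mul_assoc, mul_smul_comm, one_mul, mul_one]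
  have hJF : ∀ j k, J * F j k = F j k * J := by
    intro j k
    simp only [hJdef, hF]
    rw [← hmul, ← hmul, hIE]
  set K : Matrix (Fin n) (Fin n) ℂ := Uᴴ * J * U with hK
  have hKE : ∀ j k, K * E j k = E j k * K := by
    intro j k
    calc K * E j k = Uᴴ * (J * (U * E j k)) := by rw [hK]; simp only [mul_assoc]
      _ = Uᴴ * (J * (F j k * U)) := by rw [hFU]
      _ = Uᴴ * ((J * F j k) * U) := by rw [mul_assoc]
      _ = Uᴴ * ((F j k * J) * U) := by rw [hJF]
      _ = (Uᴴ * F j k) * (J * U) := by simp only [mul_assoc]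
      _ = (E j k * Uᴴ) * (J * U) := by rw [hUF]
      _ = E j k * K := by rw [hK]; simp only [mul_assoc]
  set c : ℂ := K z z with hc
  have hKscalar : K = c • (1 : Matrix (Fin n) (Fin n) ℂ) := by
    ext p q
    have h : (K * E q z) p z = (E q z * K) p z := by rw [hKE]
    simp only [hE] at h
    rcases eq_or_ne p q with rfl | hpq
    · rw [Matrix.mul_single_apply_same, Matrix.single_mul_apply_same] at h
      rw [Matrix.smul_apply, Matrix.one_apply_eq, smul_eq_mul, mul_one, hc]
      simpa using h
    · rw [Matrix.mul_single_apply_same,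
        Matrix.single_mul_apply_of_ne (1:ℂ) q z p z hpq K] at h
      rw [Matrix.smul_apply, Matrix.one_apply_ne hpq, smul_eq_mul, mul_zero]
      simpa using h
  have hJ2 : J * J = -1 := by
    have hII : (Complex.I • (1 : Matrix (Fin n) (Fin n) ℂ)) * (Complex.I • 1) = -1 := by
      rw [smul_mul_assoc, one_mul, smul_smul, Complex.I_mul_I, neg_smul, one_smul]
    rw [hJdef, ← hmul, hII, hneg, hone]
  have hK2 : K * K = -1 := by
    calc K * K = Uᴴ * (J * ((U * Uᴴ) * (J * U))) := by rw [hK]; simp only [mul_assoc]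
      _ = Uᴴ * ((J * J) * U) := by rw [hUUd, one_mul, mul_assoc]
      _ = -(Uᴴ * U) := by rw [hJ2]; simp
      _ = -1 := by rw [hUU]
  have hc2 : c * c = -1 := by
    have h := congrArg (fun X : Matrix (Fin n) (Fin n) ℂ => X z z) hK2
    rw [hKscalar] at h
    simpa [Matrix.smul_apply, Matrix.one_apply, smul_eq_mul] using h
  have hcI : c = Complex.I ∨ c = -Complex.I := by
    have h2 : (c - Complex.I) * (c + Complex.I) = 0 := by
      have h3 := Complex.I_mul_I
      linear_combination hc2 - h3
    rcases mul_eq_zero.mp h2 with h3 | h3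
    · exact Or.inl (sub_eq_zero.mp h3)
    · exact Or.inr (eq_neg_of_add_eq_zero_left h3)
  have hJscalar : J = c • (1 : Matrix (Fin n) (Fin n) ℂ) := by
    have h4 : U * K * Uᴴ = J := by
      calc U * K * Uᴴ = (U * Uᴴ) * (J * (U * Uᴴ)) := by rw [hK]; simp only [mul_assoc]
        _ = J := by rw [hUUd]; simp
    rw [← h4, hKscalar, mul_smul_comm, mul_one, smul_mul_assoc, hUUd]
  -- scalar behaviour of Γ
  have hsC : ∀ (s : ℂ) (β : Matrix (Fin n) (Fin n) ℂ),
      Γ (s • β) = (↑s.re + ↑s.im * c) • Γ β := by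
    intro s β
    have h1 : s • β = (s.re : ℝ) • β
        + (s.im : ℝ) • ((Complex.I • (1 : Matrix (Fin n) (Fin n) ℂ)) * β) := by
      rw [smul_mul_assoc, one_mul]
      ext p q
      simp only [Matrix.smul_apply, Matrix.add_apply, smul_eq_mul, Complex.real_smul]
      linear_combination (β p q) * (Complex.re_add_im s).symm
    rw [h1, hadd, hsmul, hsmul, hmul, ← hJdef, hJscalar, smul_mul_assoc, one_mul]
    ext p q
    simp only [Matrix.smul_apply, Matrix.add_apply, smul_eq_mul, Complex.real_smul]
    ring
  -- final assembly
  have hfinal : ∀ (β γ₀ : Matrix (Fin n) (Fin n) ℂ),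
      (∀ j k, Γ (Matrix.single j k (β j k)) = U * Matrix.single j k (γ₀ j k) * Uᴴ) →
      Γ β = U * γ₀ * Uᴴ := by
    intro β γ₀ h
    have e1 : Γ β = ∑ j, ∑ k, Γ (Matrix.single j k (β j k)) := by
      conv_lhs => rw [matrix_eq_sum_single β]
      rw [hsum]
      exact Finset.sum_congr rfl fun j _ => hsum _
    rw [e1]
    calc (∑ j, ∑ k, Γ (Matrix.single j k (β j k)))
        = ∑ j, ∑ k, U * Matrix.single j k (γ₀ j k) * Uᴴ :=
          Finset.sum_congr rfl fun j _ => Finset.sum_congr rfl fun k _ => h j k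
      _ = U * (∑ j, ∑ k, Matrix.single j k (γ₀ j k)) * Uᴴ := by
          simp only [Finset.mul_sum, Finset.sum_mul]
      _ = U * γ₀ * Uᴴ := by rw [← matrix_eq_sum_single]
  have hstd : ∀ (j k : Fin n) (s : ℂ), Matrix.single j k s = s • E j k := by
    intro j k s
    simp only [hE]
    rw [smul_single, smul_eq_mul, mul_one]
  refine ⟨U, hUmem, ?_⟩
  rcases hcI with hcI | hcI
  · left
    intro α
    refine hfinal α α fun j k => ?_
    have e : Γ (E j k) = U * E j k * Uᴴ := hΓE j k
    rw [hstd j k, hsC, e, hcI, Complex.re_add_im]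
    simp only [smul_mul_assoc, mul_smul_comm]
  · right
    intro α
    refine hfinal α (α.map (starRingEnd ℂ)) fun j k => ?_
    have e : Γ (E j k) = U * E j k * Uᴴ := hΓE j k
    have e2 : (↑(α j k).re + ↑(α j k).im * c) = (starRingEnd ℂ) (α j k) := by
      rw [hcI]
      apply Complex.ext <;> simp
    have e3 : (α.map (starRingEnd ℂ)) j k = (starRingEnd ℂ) (α j k) := rfl
    rw [hstd j k, hsC, e, e2, e3, hstd j k]
    simp only [smul_mul_assoc, mul_smul_comm]
end
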